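/- arXiv:1011.1539 — 7 statements merged into one kernel-verified Lean document; each statement's English description precedes it below -/
import Mathlib

section
/- Let p be a prime, n an integer coprime to p, and k ≥ 1. Then the multiplicative order of n modulo p^k equals j with j dividing p−1 if and only if the multiplicative order of n modulo p^ℓ equals j for every 1 ≤ ℓ ≤ k. -/
open Finset in
private lemma lift_step (p : ℕ) (hp : p.Prime) (a : ℤ) (ℓ : ℕ) (hℓ : 1 ≤ ℓ)
    (h : (p : ℤ) ^ ℓ ∣ a - 1) : (p : ℤ) ^ (ℓ + 1) ∣ a ^ p - 1 := by
  have hp1 : (p : ℤ) ∣ a - 1 := dvd_trans (dvd_pow_self _ (by omega)) h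
  have hsum : (p : ℤ) ∣ ∑ i ∈ range p, a ^ i := by
    have h2 : (p : ℤ) ∣ ∑ i ∈ range p, (a ^ i - 1) :=
      Finset.dvd_sum fun i _ => hp1.trans (by simpa using sub_dvd_pow_sub_pow a 1 i)
    have h3 : ∑ i ∈ range p, (a ^ i - 1) = (∑ i ∈ range p, a ^ i) - p := by
      rw [Finset.sum_sub_distrib]; simp
    rw [h3] at h2
    have := dvd_add h2 (dvd_refl (p : ℤ))
    simpa using this
  calc (p : ℤ) ^ (ℓ + 1) = (p : ℤ) * (p : ℤ) ^ ℓ := by ring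
    _ ∣ (∑ i ∈ range p, a ^ i) * (a - 1) := mul_dvd_mul hsum h
    _ = a ^ p - 1 := geom_sum_mul a p

theorem stmt_2 (p n k j : ℕ) (hp : p.Prime) (hcop : n.Coprime p) (hk : 1 ≤ k) :
    (orderOf (n : ZMod (p ^ k)) = j ∧ j ∣ p - 1) ↔
      ∀ ℓ, 1 ≤ ℓ → ℓ ≤ k → orderOf (n : ZMod (p ^ ℓ)) = j := by
  have key : ∀ (m t : ℕ), ((n : ZMod m) ^ t = 1) ↔ n ^ t ≡ 1 [MOD m] := by
    intro m t
    rw [← Nat.cast_pow, ← Nat.cast_one, ZMod.natCast_eq_natCast_iff]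
  constructor
  · rintro ⟨hj, hdvd⟩ ℓ hℓ1 hℓk
    set m := orderOf (n : ZMod (p ^ ℓ)) with hm
    have hmj : m ∣ j := by
      apply orderOf_dvd_of_pow_eq_one
      rw [key]
      have : (n : ZMod (p ^ k)) ^ j = 1 := hj ▸ pow_orderOf_eq_one _
      exact ((key _ _).mp this).of_dvd (pow_dvd_pow p hℓk)
    have hlift : ∀ t, n ^ (p ^ t * m) ≡ 1 [MOD p ^ (ℓ + t)] := by
      intro t
      induction t with
      | zero => simpa using (key _ _).mp (pow_orderOf_eq_one (n : ZMod (p ^ ℓ)))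
      | succ t ih =>
        have hint : ((p : ℤ)) ^ (ℓ + t) ∣ ((n : ℤ)) ^ (p ^ t * m) - 1 := by
          have h' := Nat.modEq_iff_dvd.mp ih.symm
          push_cast at h'
          exact h'
        have hstep := lift_step p hp ((n : ℤ) ^ (p ^ t * m)) (ℓ + t) (by omega) hint
        rw [← pow_mul] at hstep
        rw [Nat.modEq_iff_dvd]
        push_cast
        rw [show ℓ + (t + 1) = ℓ + t + 1 by ring, show p ^ (t + 1) * m = p ^ t * m * p by ring]
        exact dvd_sub_comm.mp hstep
    have hjd : j ∣ p ^ (k - ℓ) * m := by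
      rw [← hj]
      apply orderOf_dvd_of_pow_eq_one
      rw [key]
      have := hlift (k - ℓ)
      rwa [show ℓ + (k - ℓ) = k by omega] at this
    have hp1c : (p - 1).Coprime p :=
      (Nat.coprime_self_sub_left hp.one_lt.le).mpr (Nat.coprime_one_left p)
    have hjp : j.Coprime p := Nat.Coprime.coprime_dvd_left hdvd hp1c
    have hjm : j ∣ m := (Nat.Coprime.pow_right _ hjp).dvd_of_dvd_mul_left hjd
    exact Nat.dvd_antisymm hmj hjm
  · intro h
    refine ⟨h k hk le_rfl, ?_⟩
    rw [← h 1 le_rfl hk]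
    haveI := Fact.mk hp
    have hne : (n : ZMod p) ≠ 0 := by
      rw [Ne, ZMod.natCast_eq_zero_iff]
      intro hd
      have hpd : p ∣ 1 := hcop ▸ Nat.dvd_gcd hd dvd_rfl
      exact hp.one_lt.ne' (Nat.dvd_one.mp hpd)
    rw [pow_one]
    exact orderOf_dvd_of_pow_eq_one (ZMod.pow_card_sub_one_eq_one hne)
end

section
/- Let T be the Möbius permutation of F_q given by the matrix A = [[a,b],[c,d]] with c ≠ 0, ad − bc ≠ 0, and q odd. If the characteristic polynomial of A is irreducible over F_q and its roots α₁, α₂ ∈ F_{q²} satisfy (α₁/α₂)² = 1 with α₁ ≠ α₂ (equivalently, trace(A) = a + d = 0), then T is an involution of F_q with exactly one fixed point. -/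
open Polynomial in
theorem stmt_11 {F : Type*} [Field F] [Fintype F] [DecidableEq F] (q : ℕ)
    (hq : Fintype.card F = q) (hodd : Odd q) (a b c d : F)
    (hc : c ≠ 0) (hdet : a * d - b * c ≠ 0) (T : F → F)
    (hT : ∀ x : F, T x = if x = -d / c then a / c else (a * x + b) / (c * x + d))
    (hirr : Irreducible (X ^ 2 - C (a + d) * X + C (a * d - b * c) : F[X]))
    (htr : a + d = 0) :
    T ∘ T = id ∧ ∃! x : F, T x = x := by
  have hd : d = -a := by linear_combination htr
  subst hd
  have hk : a * a + b * c ≠ 0 := by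
    intro h; apply hdet; linear_combination -h
  -- no element squares to a*a + b*c
  have hnr : ∀ y : F, y * y ≠ a * a + b * c := by
    intro y hy
    have hroot : IsRoot (X ^ 2 - C (a + -a) * X + C (a * -a - b * c)) y := by
      simp [IsRoot, eval_pow]
      linear_combination hy
    obtain ⟨g, hg⟩ := (dvd_iff_isRoot).mpr hroot
    rcases hirr.isUnit_or_isUnit hg with hu | hu
    · exact (Polynomial.not_isUnit_X_sub_C y) hu
    · have hdeg : (X ^ 2 - C (a + -a) * X + C (a * -a - b * c) : F[X]).degree = 2 := by
        compute_degree!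
      rw [hg, degree_mul, degree_eq_zero_of_isUnit hu, degree_X_sub_C] at hdeg
      simp at hdeg
  have hden : ∀ x : F, x ≠ -(-a) / c → c * x + -a ≠ 0 := by
    intro x hx h
    apply hx
    field_simp
    linear_combination h
  constructor
  · funext x
    simp only [Function.comp_apply, id_eq]
    by_cases hx : x = -(-a) / c
    · have h1 : T x = a / c := by rw [hT x, if_pos hx]
      have h2 : T (a / c) = a / c := by
        rw [hT]
        rw [if_pos (by field_simp)]
      rw [h1, h2, hx]; field_simp
    · have hne : c * x + -a ≠ 0 := hden x hx
      have h1 : T x = (a * x + b) / (c * x + -a) := by rw [hT x, if_neg hx]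
      have hTx : T x ≠ -(-a) / c := by
        rw [h1]
        intro h
        rw [div_eq_div_iff hne hc] at h
        apply hk
        linear_combination h
      have hne2 : c * T x + -a ≠ 0 := hden _ hTx
      rw [hT (T x), if_neg hTx]
      rw [div_eq_iff hne2, h1]
      have hy := div_mul_cancel₀ (a * x + b) hne
      linear_combination (-1) * hy
  · refine ⟨a / c, ?_, ?_⟩
    · show T (a / c) = a / c
      rw [hT, if_pos (by field_simp)]
    · intro x hx
      by_cases hxc : x = -(-a) / c
      · rw [hxc]; field_simp
      · exfalso
        rw [hT x, if_neg hxc] at hx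
        have hne : c * x + -a ≠ 0 := hden x hxc
        rw [div_eq_iff hne] at hx
        exact hnr (c * x - a) (by linear_combination -c * hx)
end

section
/- Let q be an odd prime power, a a non-square in F_q^*, and n, m positive integers with gcd(n, q+1) = 1 and n·m ≡ 1 (mod q+1). Then the Rédei function R_n(·, a) is a permutation of F_q and its compositional inverse is R_m(·, a), i.e., R_m(R_n(x, a), a) = x for all x ∈ F_q. -/
open Polynomial AdjoinRoot

namespace RedeiAux

variable {F : Type*} [Field F]

lemma monicQ (a : F) : (X ^ 2 - C a : F[X]).Monic :=
  monic_X_pow_sub_C a two_ne_zero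

lemma degQ (a : F) : (X ^ 2 - C a : F[X]).degree = 2 :=
  degree_X_pow_sub_C two_pos a

/-- coefficient extraction -/
noncomputable def co (a : F) (i : ℕ) (z : AdjoinRoot (X ^ 2 - C a : F[X])) : F :=
  (modByMonicHom (monicQ a) z).coeff i

lemma co_mk (a : F) (i : ℕ) (f : F[X]) :
    co a i (mk _ f) = (f %ₘ (X ^ 2 - C a)).coeff i := by
  rw [co, modByMonicHom_mk]

lemma co_lin (a g h : F) :
    co a 0 (of _ g + of _ h * root (X ^ 2 - C a : F[X])) = g ∧
    co a 1 (of _ g + of _ h * root (X ^ 2 - C a : F[X])) = h := by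
  have hmk : (of (X ^ 2 - C a : F[X]) g + of _ h * root _)
      = mk (X ^ 2 - C a : F[X]) (C g + C h * X) := by
    rw [map_add, map_mul, mk_C, mk_C, mk_X]
  have hdeg : (C g + C h * X : F[X]).degree < (X ^ 2 - C a : F[X]).degree := by
    rw [degQ]
    calc (C g + C h * X : F[X]).degree ≤ max (C g).degree (C h * X).degree := degree_add_le _ _
    _ < 2 := by
        apply max_lt <;> apply lt_of_le_of_lt
        · exact degree_C_le
        · norm_num
        · exact degree_C_mul_X_le h
        · norm_num
  have hmod : (C g + C h * X : F[X]) %ₘ (X ^ 2 - C a) = C g + C h * X :=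
    (modByMonic_eq_self_iff (monicQ a)).mpr hdeg
  constructor <;> rw [hmk, co_mk, hmod] <;> simp

/-- representation -/
lemma repr_eq (a : F) (z : AdjoinRoot (X ^ 2 - C a : F[X])) :
    z = of _ (co a 0 z) + of _ (co a 1 z) * root _ := by
  obtain ⟨f, rfl⟩ := mk_surjective (g := (X ^ 2 - C a : F[X])) z
  have h1 : mk (X ^ 2 - C a : F[X]) (modByMonicHom (monicQ a) (mk _ f)) = mk _ f :=
    mk_leftInverse (monicQ a) (mk _ f)
  set r : F[X] := modByMonicHom (monicQ a) (mk (X ^ 2 - C a : F[X]) f) with hr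
  have hdeg : r.degree ≤ 1 := by
    apply Order.le_of_lt_succ
    have := degree_modByMonic_lt f (monicQ a)
    rw [hr, modByMonicHom_mk]
    rw [degQ a] at this
    exact this
  have hrlin : r = C (r.coeff 1) * X + C (r.coeff 0) := eq_X_add_C_of_degree_le_one hdeg
  have e0 : co a 0 (mk (X ^ 2 - C a : F[X]) f) = r.coeff 0 := rfl
  have e1 : co a 1 (mk (X ^ 2 - C a : F[X]) f) = r.coeff 1 := rfl
  rw [e0, e1, ← h1, hrlin]
  rw [map_add, map_mul, mk_C, mk_C, mk_X]
  simp only [coeff_add, coeff_C, coeff_C_mul, coeff_X_zero, coeff_X_one]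
  norm_num
  ring

lemma redeiFun_eq (a : F) (n : ℕ) (x : F) :
    (((C x + X) ^ n %ₘ (X ^ 2 - C a)).coeff 0 / ((C x + X) ^ n %ₘ (X ^ 2 - C a)).coeff 1 : F)
      = co a 0 ((of _ x + root (X ^ 2 - C a : F[X])) ^ n)
        / co a 1 ((of _ x + root (X ^ 2 - C a : F[X])) ^ n) := by
  have hmk : (of (X ^ 2 - C a : F[X]) x + root _) ^ n = mk _ ((C x + X) ^ n) := by
    rw [map_pow, map_add, mk_C, mk_X]
  rw [hmk, co_mk, co_mk]

end RedeiAux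

/-- The Rédei function `R_n(x, a) = G_n(x,a) / H_n(x,a)` over a field `F`, where
`(x + √a)^n = G_n(x,a) + H_n(x,a)·√a`.  Equivalently, `G_n` and `H_n` are the
coefficients of `1` and `X` in `(C x + X)^n` reduced modulo `X^2 - C a`. -/
noncomputable def redeiFun {F : Type*} [Field F] (a : F) (n : ℕ) (x : F) : F :=
  ((Polynomial.C x + Polynomial.X) ^ n %ₘ (Polynomial.X ^ 2 - Polynomial.C a)).coeff 0 /
    ((Polynomial.C x + Polynomial.X) ^ n %ₘ (Polynomial.X ^ 2 - Polynomial.C a)).coeff 1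

namespace RedeiAux

lemma key {F : Type*} [Field F] [Fintype F] (q n m : ℕ) (a : F)
    (hq : Fintype.card F = q) (hodd : Odd q) (ha : a ≠ 0) (hns : ¬ IsSquare a)
    (hn : 0 < n) (hm : 0 < m) (hcop : Nat.Coprime n (q + 1))
    (hnm : n * m ≡ 1 [MOD q + 1]) (x : F) :
    redeiFun a m (redeiFun a n x) = x := by
  haveI hQirr : Fact (Irreducible (X ^ 2 - C a : F[X])) :=
    ⟨X_pow_sub_C_irreducible_of_prime Nat.prime_two
      (fun b hb => hns ⟨b, by rw [← hb]; ring⟩)⟩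
  set p := ringChar F with hpdef
  clear_value p
  haveI : CharP F p := hpdef ▸ ringChar.charP F
  have hp : p.Prime := CharP.char_is_prime F p
  haveI : Fact p.Prime := ⟨hp⟩
  obtain ⟨e, -, hqe⟩ := FiniteField.card F p
  rw [hq] at hqe
  have hp2 : p ≠ 2 := by
    intro h
    rw [h] at hqe
    have : ¬ Odd q := by
      rw [hqe]
      simp [Nat.even_pow, e.pos.ne', Nat.not_odd_iff_even]
    exact this hodd
  haveI : CharP (AdjoinRoot (X ^ 2 - C a : F[X])) p :=
    charP_of_injective_algebraMap (algebraMap F _).injective p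
  have hofinj : Function.Injective (of (X ^ 2 - C a : F[X])) :=
    (of (X ^ 2 - C a : F[X])).injective
  -- Frobenius
  have frobq : ∀ z w : AdjoinRoot (X ^ 2 - C a : F[X]), (z + w) ^ q = z ^ q + w ^ q := by
    intro z w; rw [hqe]; exact add_pow_char_pow z w p e
  have of_pow_q : ∀ g : F, (of (X ^ 2 - C a : F[X]) g) ^ q = of _ g := by
    intro g
    rw [← map_pow, ← hq, FiniteField.pow_card]
  set θ := root (X ^ 2 - C a : F[X]) with hθdef
  clear_value θ
  have hθ2 : θ ^ 2 = of _ a := by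
    have h := mk_self (f := (X ^ 2 - C a : F[X]))
    rw [map_sub, map_pow, mk_X, mk_C, sub_eq_zero, ← hθdef] at h
    exact h
  have hofa : (of (X ^ 2 - C a : F[X])) a ≠ 0 := fun h => ha (hofinj (by simp [h]))
  have hθ0 : θ ≠ 0 := by
    intro h
    rw [h, zero_pow (by norm_num)] at hθ2
    exact hofa hθ2.symm
  -- Euler's criterion
  have hrc2 : ringChar F ≠ 2 := by rw [← hpdef]; exact hp2
  have hq2 : 2 * (q / 2) + 1 = q := by
    obtain ⟨t, ht⟩ := hodd; omega
  have hE : a ^ (q / 2) = -1 := by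
    have h1 : a ^ (q / 2) ≠ 1 := by
      intro h
      exact hns ((FiniteField.isSquare_iff hrc2 ha).mpr (by rwa [hq]))
    have hsq : a ^ (q / 2) * a ^ (q / 2) = 1 := by
      rw [← pow_add]
      have h2 : q / 2 + q / 2 = q - 1 := by omega
      rw [h2, ← hq]
      exact FiniteField.pow_card_sub_one_eq_one a ha
    rcases mul_self_eq_one_iff.mp hsq with h | h
    · exact absurd h h1
    · exact h
  have hθq : θ ^ q = -θ := by
    calc θ ^ q = (θ ^ 2) ^ (q / 2) * θ := by rw [← pow_mul, ← pow_succ, hq2]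
    _ = of _ (a ^ (q / 2)) * θ := by rw [hθ2, map_pow]
    _ = -θ := by rw [hE]; simp
  set u := of (X ^ 2 - C a : F[X]) x + θ with hudef
  set v := of (X ^ 2 - C a : F[X]) x - θ with hvdef
  clear_value u v
  have huq : u ^ q = v := by
    rw [hudef, hvdef, frobq, of_pow_q, hθq]; ring
  have hvq : v ^ q = u := by
    rw [hvdef, hudef, sub_eq_add_neg ((of (X ^ 2 - C a : F[X])) x) θ, frobq, of_pow_q,
      hodd.neg_pow, hθq, neg_neg]
  have hxa : x ^ 2 - a ≠ 0 := by
    intro h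
    exact hns ⟨x, by linear_combination -h⟩
  have huv : u * v = of _ (x ^ 2 - a) := by
    have h : u * v = (of (X ^ 2 - C a : F[X]) x) ^ 2 - θ ^ 2 := by rw [hudef, hvdef]; ring
    rw [h, hθ2, map_sub, map_pow]
  have huv0 : u * v ≠ 0 := by
    rw [huv]; exact fun h => hxa (hofinj (by simp [h]))
  have hu0 : u ≠ 0 := left_ne_zero_of_mul huv0
  have hv0 : v ≠ 0 := right_ne_zero_of_mul huv0
  -- the denominator H is nonzero
  have hH : co a 1 (u ^ n) ≠ 0 := by
    intro h0
    have hz : u ^ n = of _ (co a 0 (u ^ n)) := by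
      conv_lhs => rw [repr_eq a (u ^ n)]
      rw [← hθdef, h0, map_zero, zero_mul, add_zero]
    have hzq : (u ^ n) ^ q = u ^ n := by
      conv_lhs => rw [hz]
      rw [of_pow_q, ← hz]
    have hvn : v ^ n = u ^ n := by
      rw [← huq, ← pow_mul, mul_comm q n, pow_mul, hzq]
    have hwn : (u * v⁻¹) ^ n = 1 := by
      rw [mul_pow, inv_pow, hvn, mul_inv_cancel₀ (pow_ne_zero n hu0)]
    have hwq1 : (u * v⁻¹) ^ (q + 1) = 1 := by
      have hwq : (u * v⁻¹) ^ q = v * u⁻¹ := by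
        rw [mul_pow, inv_pow, huq, hvq]
      rw [pow_succ (u * v⁻¹) q, hwq]
      field_simp
    have hdvd : orderOf (u * v⁻¹) ∣ 1 := by
      rw [← hcop]
      exact Nat.dvd_gcd (orderOf_dvd_of_pow_eq_one hwn) (orderOf_dvd_of_pow_eq_one hwq1)
    have hw1 : u * v⁻¹ = 1 := orderOf_eq_one_iff.mp (Nat.dvd_one.mp hdvd)
    have huv' : u = v := by
      rw [mul_inv_eq_one₀ hv0] at hw1
      exact hw1
    have h2θ : (2 : AdjoinRoot (X ^ 2 - C a : F[X])) * θ = 0 := by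
      rw [hudef, hvdef] at huv'
      linear_combination huv'
    rcases mul_eq_zero.mp h2θ with h | h
    · exact Ring.two_ne_zero
        (by rwa [ringChar.eq (AdjoinRoot (X ^ 2 - C a : F[X])) p]) h
    · exact hθ0 h
  -- main computation
  have hrepn : u ^ n = of _ (co a 0 (u ^ n)) + of _ (co a 1 (u ^ n)) * θ := by
    conv_lhs => rw [repr_eq a (u ^ n)]
    rw [← hθdef]
  set G := co a 0 (u ^ n) with hGdef
  set H := co a 1 (u ^ n) with hHdef
  clear_value G H
  have h1 : redeiFun a n x = G / H := by
    rw [redeiFun, redeiFun_eq, ← hθdef, ← hudef, ← hGdef, ← hHdef]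
  have hofH : (of (X ^ 2 - C a : F[X])) H ≠ 0 := fun h => hH (hofinj (by simp [h]))
  obtain ⟨k, hk⟩ : ∃ k, n * m = 1 + (q + 1) * k := by
    have h1le : 1 ≤ n * m := Nat.one_le_iff_ne_zero.mpr (by positivity)
    obtain ⟨k, hk⟩ := (Nat.modEq_iff_dvd' h1le).mp hnm.symm
    exact ⟨k, by omega⟩
  have huq1 : u ^ (q + 1) = of _ (x ^ 2 - a) := by
    rw [pow_succ u q, huq]; linear_combination huv
  set c : F := (x ^ 2 - a) ^ k / H ^ m with hcdef
  have hc0 : c ≠ 0 := div_ne_zero (pow_ne_zero k hxa) (pow_ne_zero m hH)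
  have hyθ : of (X ^ 2 - C a : F[X]) (G / H) + θ = u ^ n * (of _ H)⁻¹ := by
    rw [map_div₀, hrepn, div_eq_mul_inv]
    field_simp
  have hkey : (of (X ^ 2 - C a : F[X]) (G / H) + θ) ^ m
      = of _ (x * c) + of _ c * θ := by
    rw [hyθ, mul_pow, ← pow_mul, hk, pow_add, pow_one, pow_mul, huq1,
      ← map_pow, inv_pow, ← map_pow]
    simp only [hcdef, map_mul, map_div₀, map_pow]
    rw [hudef]
    field_simp
  have h2 : redeiFun a m (G / H) = x := by
    rw [redeiFun, redeiFun_eq, ← hθdef]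
    rw [hkey, hθdef, (co_lin a (x * c) c).1, (co_lin a (x * c) c).2,
      mul_div_assoc, div_self hc0, mul_one]
  rw [h1, h2]

end RedeiAux

theorem stmt_13 {F : Type*} [Field F] [Fintype F] (q n m : ℕ) (a : F)
    (hq : Fintype.card F = q) (hodd : Odd q) (ha : a ≠ 0) (hns : ¬ IsSquare a)
    (hn : 0 < n) (hm : 0 < m) (hcop : Nat.Coprime n (q + 1))
    (hnm : n * m ≡ 1 [MOD q + 1]) :
    Function.Bijective (redeiFun a n : F → F) ∧
      ∀ x : F, redeiFun a m (redeiFun a n x) = x := by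
  have hinv : ∀ x : F, redeiFun a m (redeiFun a n x) = x :=
    RedeiAux.key q n m a hq hodd ha hns hn hm hcop hnm
  have hinj : Function.Injective (redeiFun a n : F → F) :=
    Function.LeftInverse.injective hinv
  exact ⟨Finite.injective_iff_bijective.mp hinj, hinv⟩
end

section
/- Let q be an odd prime power, a a non-square in F_q^*, gcd(n, q+1) = 1, and j a positive integer. The Rédei permutation R_n(·, a) of F_q has a cycle of length j if and only if there exists a divisor s of q+1 such that j is the multiplicative order of n modulo s. -/
open Polynomial Function

theorem redei_irred {F : Type*} [Field F] {a : F} (hns : ¬ IsSquare a) :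
    Irreducible (X ^ 2 - C a : F[X]) :=
  X_pow_sub_C_irreducible_of_prime Nat.prime_two
    (fun b hb => hns ⟨b, by rw [← hb]; ring⟩)

theorem stmt_15 {F : Type*} [Field F] [Fintype F] (q n j : ℕ) (a : F)
    (hq : Fintype.card F = q) (hodd : Odd q) (ha : a ≠ 0) (hns : ¬ IsSquare a)
    (hn : 0 < n) (hcop : Nat.Coprime n (q + 1)) (hj : 0 < j) :
    (∃ x : F, Function.minimalPeriod (redeiFun a n) x = j) ↔
      ∃ s, s ∣ q + 1 ∧ orderOf (n : ZMod s) = j := by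
  classical
  have hq1 : 1 ≤ q := by rw [← hq]; exact Fintype.card_pos
  have hqodd : q % 2 = 1 := Nat.odd_iff.mp hodd
  have hgcd : Nat.gcd n (q + 1) = 1 := hcop
  have hnodd : n % 2 = 1 := by
    rcases Nat.even_or_odd n with he | ho
    · exfalso
      obtain ⟨k, hk⟩ := he
      have h2 : (2 : ℕ) ∣ Nat.gcd n (q + 1) :=
        Nat.dvd_gcd ⟨k, by omega⟩ ⟨(q + 1) / 2, by omega⟩
      rw [hgcd] at h2; omega
    · exact Nat.odd_iff.mp ho
  have hchar2 : ringChar F ≠ 2 := by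
    intro h
    have h2 := FiniteField.even_card_of_char_two h
    rw [hq] at h2; omega
  have h2F : (2 : F) ≠ 0 := Ring.two_ne_zero hchar2
  -- Euler's criterion : a ^ (q / 2) = -1
  have hEuler : a ^ (q / 2) = -1 := by
    have hiff := FiniteField.isSquare_iff hchar2 ha
    rw [hq] at hiff
    have h1 : a ^ (q / 2) ≠ 1 := fun h => hns (hiff.mpr h)
    have hsq : a ^ (q / 2) * a ^ (q / 2) = 1 := by
      rw [← pow_add]
      have h' : q / 2 + q / 2 = q - 1 := by omega
      rw [h']
      have h'' := FiniteField.pow_card_sub_one_eq_one a ha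
      rwa [hq] at h''
    rcases mul_self_eq_one_iff.mp hsq with h | h
    · exact absurd h h1
    · exact h
  -- characteristic
  set p := ringChar F with hp
  haveI hpF : CharP F p := ringChar.charP F
  haveI hfact : Fact p.Prime := ⟨CharP.char_is_prime F p⟩
  obtain ⟨m, hpprime, hcard⟩ := FiniteField.card F p
  rw [hq] at hcard
  -- the quadratic extension
  haveI : Fact (Irreducible (X ^ 2 - C a : F[X])) := ⟨redei_irred hns⟩
  set K := AdjoinRoot (X ^ 2 - C a : F[X]) with hK
  haveI : CharP K p := charP_of_injective_algebraMap (algebraMap F K).injective p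
  haveI : ExpChar K p := ExpChar.prime hfact.out
  set θ : K := AdjoinRoot.root (X ^ 2 - C a : F[X]) with hθ
  set ι : F →+* K := algebraMap F K with hι
  have hι_inj : Function.Injective ι := ι.injective
  have hmon : (X ^ 2 - C a : F[X]).Monic := monic_X_pow_sub_C a two_ne_zero
  have haev0 : (Polynomial.aeval θ) (X ^ 2 - C a : F[X]) = 0 := by
    rw [AdjoinRoot.aeval_eq, AdjoinRoot.mk_self]
  have hθ2 : θ ^ 2 = ι a := by
    have h := haev0
    rw [map_sub, map_pow, aeval_X, aeval_C, sub_eq_zero] at h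
    rw [h, hι]
  have hθ0 : θ ≠ 0 := by
    intro h
    apply ha
    apply hι_inj
    rw [← hθ2, h, map_zero]
    ring
  have h2K : (2 : K) ≠ 0 := by
    intro h
    apply h2F
    apply hι_inj
    rw [map_zero]
    have : ι (2 : F) = (2 : K) := by
      rw [hι]; exact map_ofNat (algebraMap F K) 2
    rw [this, h]
  -- Frobenius facts
  have hfrob_add : ∀ u v : K, (u + v) ^ q = u ^ q + v ^ q := by
    intro u v
    rw [hcard]
    exact add_pow_char_pow u v p ↑m
  have hfrob_ι : ∀ x : F, (ι x) ^ q = ι x := by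
    intro x
    have hx : x ^ q = x := by rw [← hq]; exact FiniteField.pow_card x
    rw [← map_pow, hx]
  have hfrob_θ : θ ^ q = -θ := by
    have hq2 : q = 2 * (q / 2) + 1 := by omega
    calc θ ^ q = (θ ^ 2) ^ (q / 2) * θ := by rw [← pow_mul, ← pow_succ, ← hq2]
    _ = ι (a ^ (q / 2)) * θ := by rw [hθ2, map_pow]
    _ = -θ := by rw [hEuler, map_neg, map_one]; ring
  -- the conjugating map ψ
  set ψ : F → K := fun y => (ι y + θ) / (ι y - θ) with hψ
  have hsub0 : ∀ y : F, ι y - θ ≠ 0 := by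
    intro y h
    rw [sub_eq_zero] at h
    exact hns ⟨y, hι_inj (by rw [← hθ2, ← h, map_mul, pow_two])⟩
  have hadd0 : ∀ y : F, ι y + θ ≠ 0 := by
    intro y h
    have h' : θ = ι (-y) := by
      rw [map_neg, eq_neg_iff_add_eq_zero, add_comm]
      exact h
    exact hns ⟨-y, hι_inj (by rw [← hθ2, h', map_mul, pow_two])⟩
  have hψ0 : ∀ y : F, ψ y ≠ 0 := fun y => div_ne_zero (hadd0 y) (hsub0 y)
  have hψ1 : ∀ y : F, ψ y ≠ 1 := by
    intro y h
    simp only [hψ] at h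
    rw [div_eq_one_iff_eq (hsub0 y)] at h
    have h2 : (2 : K) * θ = 0 := by linear_combination h
    rcases mul_eq_zero.mp h2 with h' | h'
    · exact h2K h'
    · exact hθ0 h'
  have hψ_inj : Function.Injective ψ := by
    intro x y h
    simp only [hψ] at h
    rw [div_eq_div_iff (hsub0 x) (hsub0 y)] at h
    have h2 : (2 : K) * θ * (ι y - ι x) = 0 := by linear_combination h
    rcases mul_eq_zero.mp h2 with h' | h'
    · rcases mul_eq_zero.mp h' with h'' | h''
      · exact absurd h'' h2K
      · exact absurd h'' hθ0
    · exact hι_inj (sub_eq_zero.mp h').symm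
  have hψpow : ∀ y : F, (ψ y) ^ (q + 1) = 1 := by
    intro y
    have h1 : (ι y + θ) ^ (q + 1) = (ι y - θ) * (ι y + θ) := by
      rw [pow_succ, hfrob_add, hfrob_ι, hfrob_θ]; ring
    have h2 : (ι y - θ) ^ (q + 1) = (ι y + θ) * (ι y - θ) := by
      have hsub : ι y - θ = ι y + -θ := by ring
      rw [pow_succ, hsub, hfrob_add, hfrob_ι,
        (hodd.neg_pow θ : (-θ) ^ q = -(θ ^ q)), hfrob_θ, neg_neg]
    simp only [hψ]
    rw [div_pow, h1, h2, mul_comm (ι y - θ)]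
    exact div_self (mul_ne_zero (hadd0 y) (hsub0 y))
  -- nth power fixes only 1 among (q+1)-th roots of unity
  have hpow_ne_one : ∀ u : K, u ^ (q + 1) = 1 → u ≠ 1 → u ^ n ≠ 1 := by
    intro u hu hu1 hun
    have h1 : orderOf u ∣ q + 1 := orderOf_dvd_of_pow_eq_one hu
    have h2 : orderOf u ∣ n := orderOf_dvd_of_pow_eq_one hun
    have h3 : orderOf u ∣ 1 := by
      have h4 := Nat.dvd_gcd h2 h1
      rwa [hgcd] at h4
    exact hu1 (orderOf_eq_one_iff.mp (Nat.dvd_one.mp h3))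
  -- semiconjugacy : ψ (redeiFun a n y) = (ψ y) ^ n
  have hsc : ∀ y : F, ψ (redeiFun a n y) = (ψ y) ^ n := by
    intro y
    set P : F[X] := (C y + X) ^ n %ₘ (X ^ 2 - C a) with hPdef
    set G : F := P.coeff 0 with hG
    set H : F := P.coeff 1 with hH
    have hdeg : P.degree ≤ 1 := by
      have hlt : P.degree < (X ^ 2 - C a : F[X]).degree := degree_modByMonic_lt _ hmon
      rw [degree_X_pow_sub_C (by norm_num) a] at hlt
      contrapose! hlt
      simpa [one_add_one_eq_two] using Nat.WithBot.add_one_le_of_lt hlt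
    have hP : P = C H * X + C G := eq_X_add_C_of_degree_le_one hdeg
    have haeval : (ι y + θ) ^ n = ι G + ι H * θ := by
      have h1 : (Polynomial.aeval θ) ((C y + X) ^ n : F[X]) = (Polynomial.aeval θ) P := by
        conv_lhs => rw [← modByMonic_add_div ((C y + X) ^ n : F[X]) (X ^ 2 - C a)]
        rw [map_add, map_mul, haev0, zero_mul, add_zero, ← hPdef]
      rw [map_pow, map_add, aeval_C, aeval_X] at h1
      rw [← hι] at h1
      rw [h1, hP, map_add, map_mul, aeval_C, aeval_X, aeval_C, ← hι]
      ring
    -- the conjugate automorphism θ ↦ -θ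
    have hσ0 : (Polynomial.aeval (-θ)) (X ^ 2 - C a : F[X]) = 0 := by
      rw [map_sub, map_pow, aeval_X, aeval_C, neg_sq, ← hι, hθ2, sub_self]
    set σ : K →ₐ[F] K := AdjoinRoot.liftAlgHom (X ^ 2 - C a) (Algebra.ofId F K) (-θ) hσ0 with hσ
    have hσθ : σ θ = -θ := by rw [hσ]; exact AdjoinRoot.liftAlgHom_root _ _ _ hσ0
    have hσι : ∀ z : F, σ (ι z) = ι z := fun z => σ.commutes z
    have haeval' : (ι y - θ) ^ n = ι G - ι H * θ := by
      have h := congrArg σ haeval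
      rw [map_pow, map_add, map_add, map_mul, hσθ, hσι y, hσι G, hσι H] at h
      have hsub : ι y - θ = ι y + -θ := by ring
      rw [hsub, h]
      ring
    have hHne : H ≠ 0 := by
      intro h0
      apply hpow_ne_one (ψ y) (hψpow y) (hψ1 y)
      have hGne : ι G ≠ 0 := by
        intro hG0
        exact pow_ne_zero n (hadd0 y)
          (by rw [haeval, h0, map_zero, zero_mul, add_zero, hG0])
      simp only [hψ]
      rw [div_pow, haeval, haeval', h0, map_zero, zero_mul, sub_zero, add_zero]
      exact div_self hGne
    have hredei : redeiFun a n y = G / H := rfl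
    have hιH : ι H ≠ 0 := fun h => hHne (hι_inj (by rw [h, map_zero]))
    have hBne : ι G - ι H * θ ≠ 0 := by
      rw [← haeval']
      exact pow_ne_zero n (hsub0 y)
    have hden0 : ι (G / H) - θ ≠ 0 := by
      rw [map_div₀]
      intro hcon
      apply hBne
      have hx : ι G - ι H * θ = ι H * (ι G / ι H - θ) := by
        rw [mul_sub, mul_comm (ι H) (ι G / ι H), div_mul_cancel₀ _ hιH]
      rw [hx, hcon, mul_zero]
    simp only [hψ]
    rw [hredei, div_pow, haeval, haeval', div_eq_div_iff hden0 hBne, map_div₀]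
    field_simp
    all_goals try ring
    have hx' : ι H * (ι G / ι H - θ) = ι G - ι H * θ := by
      rw [mul_sub, mul_comm (ι H) (ι G / ι H), div_mul_cancel₀ _ hιH]
    all_goals rw [mul_right_comm (ι H), hx', mul_comm]
  -- iterates
  have hiter : ∀ (k : ℕ) (y : F), ψ ((redeiFun a n)^[k] y) = (ψ y) ^ (n ^ k) := by
    intro k
    induction k with
    | zero => intro y; simp
    | succ k ih =>
      intro y
      rw [Function.iterate_succ_apply', hsc, ih, ← pow_mul, ← pow_succ]
  -- the minimal period formula
  have hmp : ∀ y : F, Function.minimalPeriod (redeiFun a n) y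
      = orderOf ((n : ZMod (orderOf (ψ y)))) := by
    intro y
    set u := ψ y with hu
    set s := orderOf u with hs
    have hfin : IsOfFinOrder u := isOfFinOrder_iff_pow_eq_one.mpr ⟨q + 1, by omega, hψpow y⟩
    have hs0 : 0 < s := hfin.orderOf_pos
    have key : ∀ k : ℕ, Function.IsPeriodicPt (redeiFun a n) k y ↔ ((n : ZMod s)) ^ k = 1 := by
      intro k
      have hnk1 : 1 ≤ n ^ k := Nat.one_le_iff_ne_zero.mpr (pow_ne_zero k (by omega))
      constructor
      · intro hper
        have h1 : ψ ((redeiFun a n)^[k] y) = ψ y := congrArg ψ hper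
        rw [hiter k y] at h1
        have h2 : u ^ (n ^ k - 1) * u = u := by
          rw [← pow_succ, Nat.sub_add_cancel hnk1]
          exact h1
        have h3 : u ^ (n ^ k - 1) = 1 := by
          rcases mul_left_eq_self₀.mp h2 with h | h
          · exact h
          · exact absurd h (hψ0 y)
        have h4 : s ∣ n ^ k - 1 := orderOf_dvd_of_pow_eq_one h3
        have h5 : n ^ k ≡ 1 [MOD s] := ((Nat.modEq_iff_dvd' hnk1).mpr h4).symm
        have h6 : ((n ^ k : ℕ) : ZMod s) = ((1 : ℕ) : ZMod s) :=
          (ZMod.natCast_eq_natCast_iff _ _ _).mpr h5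
        push_cast at h6
        exact h6
      · intro hpow
        have h6 : ((n ^ k : ℕ) : ZMod s) = ((1 : ℕ) : ZMod s) := by push_cast; exact hpow
        have h5 : n ^ k ≡ 1 [MOD s] := (ZMod.natCast_eq_natCast_iff _ _ _).mp h6
        have h4 : s ∣ n ^ k - 1 := (Nat.modEq_iff_dvd' hnk1).mp h5.symm
        have h3 : u ^ (n ^ k - 1) = 1 := orderOf_dvd_iff_pow_eq_one.mp h4
        have h1 : u ^ (n ^ k) = u := by
          rw [← Nat.sub_add_cancel hnk1, pow_succ, h3, one_mul]
        have := hiter k y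
        rw [h1] at this
        exact hψ_inj this
    have hdvd : ∀ k : ℕ, Function.minimalPeriod (redeiFun a n) y ∣ k ↔
        orderOf ((n : ZMod s)) ∣ k := by
      intro k
      rw [← Function.isPeriodicPt_iff_minimalPeriod_dvd, key, orderOf_dvd_iff_pow_eq_one]
    exact Nat.dvd_antisymm ((hdvd _).mpr dvd_rfl) ((hdvd _).mp dvd_rfl)
  -- Fintype instance and cardinality for K
  set pb : PowerBasis F K := AdjoinRoot.powerBasis hmon.ne_zero with hpb
  haveI : Fintype K := Module.fintypeOfFintype pb.basis
  have hdim : pb.dim = 2 := by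
    rw [hpb, AdjoinRoot.powerBasis_dim]
    compute_degree!
  have hcardK : Fintype.card K = q ^ 2 := by
    rw [Module.card_fintype pb.basis, hq, Fintype.card_fin, hdim]
  -- surjectivity onto nontrivial (q+1)-th roots of unity
  have hsurj : ∀ u : K, u ^ (q + 1) = 1 → u ≠ 1 → ∃ y : F, ψ y = u := by
    intro u hu hu1
    have hpoly : (X ^ (q + 1) - C 1 : K[X]) ≠ 0 := X_pow_sub_C_ne_zero (by omega) 1
    set R0 : Finset K := (X ^ (q + 1) - C 1 : K[X]).roots.toFinset with hR0
    have hmem : ∀ v : K, v ^ (q + 1) = 1 → v ∈ R0 := by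
      intro v hv
      rw [hR0, Multiset.mem_toFinset, mem_roots hpoly]
      simp [IsRoot, hv]
    have hcardR0 : R0.card ≤ q + 1 := by
      calc R0.card ≤ Multiset.card (X ^ (q + 1) - C 1 : K[X]).roots :=
            Multiset.toFinset_card_le _
      _ ≤ (X ^ (q + 1) - C 1 : K[X]).natDegree := (X ^ (q + 1) - C 1 : K[X]).card_roots'
      _ = q + 1 := by compute_degree!
    have h1R : (1 : K) ∈ R0 := hmem 1 (one_pow _)
    set T : Finset K := R0.erase 1 with hT
    have hcardT : T.card ≤ q := by
      rw [hT, Finset.card_erase_of_mem h1R]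
      omega
    set im : Finset K := Finset.univ.image ψ with him
    have hcardim : im.card = q := by
      rw [him, Finset.card_image_of_injective _ hψ_inj, Finset.card_univ, hq]
    have himT : im ⊆ T := by
      intro v hv
      rw [him, Finset.mem_image] at hv
      obtain ⟨y, _, rfl⟩ := hv
      rw [hT, Finset.mem_erase]
      exact ⟨hψ1 y, hmem _ (hψpow y)⟩
    have heq : im = T := Finset.eq_of_subset_of_card_le himT (by omega)
    have huT : u ∈ T := by
      rw [hT, Finset.mem_erase]
      exact ⟨hu1, hmem u hu⟩
    rw [← heq, him, Finset.mem_image] at huT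
    obtain ⟨y, _, hy⟩ := huT
    exact ⟨y, hy⟩
  -- existence of elements of each order dividing q + 1
  have hexist : ∀ s : ℕ, s ∣ q + 1 → 1 < s →
      ∃ u : K, orderOf u = s ∧ u ^ (q + 1) = 1 ∧ u ≠ 1 := by
    intro s hsd hs1
    have hcardU : Fintype.card Kˣ = q ^ 2 - 1 := by
      rw [Fintype.card_units, hcardK]
    have hdvdU : s ∣ Fintype.card Kˣ := by
      have hfac : q ^ 2 - 1 = (q + 1) * (q - 1) := by
        have h := Nat.sq_sub_sq q 1
        simpa using h
      rw [hcardU, hfac]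
      exact hsd.trans (dvd_mul_right _ _)
    have htot : 0 < (Finset.univ.filter (fun u : Kˣ => orderOf u = s)).card := by
      rw [IsCyclic.card_orderOf_eq_totient hdvdU]
      exact Nat.totient_pos.mpr (by omega)
    obtain ⟨ux, hux⟩ := Finset.card_pos.mp htot
    have huxs : orderOf ux = s := (Finset.mem_filter.mp hux).2
    refine ⟨(ux : K), ?_, ?_, ?_⟩
    · rw [orderOf_units, huxs]
    · rw [← orderOf_dvd_iff_pow_eq_one, orderOf_units, huxs]
      exact hsd
    · intro h
      have h1 : orderOf (ux : K) = 1 := by rw [h, orderOf_one]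
      rw [orderOf_units, huxs] at h1
      omega
  -- main equivalence
  constructor
  · rintro ⟨x, hx⟩
    refine ⟨orderOf (ψ x), orderOf_dvd_of_pow_eq_one (hψpow x), ?_⟩
    rw [← hmp x, hx]
  · rintro ⟨s, hsd, hord⟩
    have hs0 : 0 < s := Nat.pos_of_dvd_of_pos hsd (by omega)
    rcases Nat.lt_or_ge 1 s with hs1 | hs1
    · obtain ⟨u, huord, hupow, hu1⟩ := hexist s hsd hs1
      obtain ⟨y, hy⟩ := hsurj u hupow hu1
      exact ⟨y, by rw [hmp y, hy, huord, hord]⟩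
    · -- s = 1, so j = 1 ; the point 0 is a fixed point
      have hseq : s = 1 := by omega
      have hj1 : j = 1 := by
        rw [← hord, hseq]
        haveI : Subsingleton (ZMod 1) := by infer_instance
        rw [Subsingleton.elim ((n : ZMod 1)) 1, orderOf_one]
      refine ⟨0, ?_⟩
      have hψzero : ψ 0 = -1 := by
        simp only [hψ]
        rw [map_zero, zero_add, zero_sub, div_neg, div_self hθ0]
      have hcharK : ringChar K = p := ringChar.eq K p
      have horderneg : orderOf (-1 : K) = 2 := by
        rw [orderOf_neg_one, if_neg]
        rw [hcharK]
        intro h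
        rw [h] at hcard
        have : q % 2 = 0 := by
          rcases Nat.eq_zero_or_pos (m : ℕ) with h0 | h0
          · exfalso; rw [h0, pow_zero] at hcard; omega
          · rw [hcard]
            have : (2 : ℕ) ∣ 2 ^ (m : ℕ) := dvd_pow_self 2 (by omega)
            omega
        omega
      rw [hmp 0, hψzero, horderneg, hj1]
      have : ((n : ZMod 2)) = 1 := by
        have : ((n % 2 : ℕ) : ZMod 2) = ((n : ℕ) : ZMod 2) := ZMod.natCast_mod n 2
        rw [← this, hnodd, Nat.cast_one]
      rw [this, orderOf_one]
end

section
/- Let q be an odd prime power, a a non-square in F_q^*, and gcd(n, q+1) = 1. For j ≥ 1, let N_j denote the number of cycles of length j of the Rédei permutation R_n(·, a) of F_q. Then j·N_j + Σ_{i | j, i < j} i·N_i + 1 = gcd(n^j − 1, q + 1). -/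
open Polynomial

set_option linter.unusedSectionVars false

namespace RedeiAux

variable {F K : Type*} [Field F] [Fintype F] [Field K] [Algebra F K]

theorem char_ne_two (q : ℕ) (hq : Fintype.card F = q) (hodd : Odd q) :
    ringChar F ≠ 2 := by
  intro h
  have := FiniteField.even_card_of_char_two (F := F) h
  rw [hq] at this
  rw [Nat.odd_iff] at hodd
  omega

theorem ringChar_K (hFK : Function.Injective (algebraMap F K)) :
    ringChar K = ringChar F := by
  haveI : CharP K (ringChar F) := charP_of_injective_algebraMap hFK (ringChar F)
  exact ringChar.eq K (ringChar F)

theorem two_ne_zero_K (q : ℕ) (hq : Fintype.card F = q) (hodd : Odd q) : (2 : K) ≠ 0 := by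
  refine Ring.two_ne_zero ?_
  rw [ringChar_K (algebraMap F K).injective]
  exact char_ne_two q hq hodd

variable (a : F) (s : K)

theorem s_not_range (hns : ¬ IsSquare a) (hs : s ^ 2 = algebraMap F K a) :
    ∀ c : F, s ≠ algebraMap F K c := by
  intro c hc
  apply hns
  refine ⟨c, ?_⟩
  have : algebraMap F K a = algebraMap F K (c * c) := by
    rw [← hs, hc, map_mul]; ring
  exact (algebraMap F K).injective this

theorem s_ne_zero (ha : a ≠ 0) (hs : s ^ 2 = algebraMap F K a) : s ≠ 0 := by
  intro h
  apply ha
  have : algebraMap F K a = 0 := by rw [← hs, h]; ring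
  simpa using (algebraMap F K).injective (by simpa using this)

theorem add_s_ne_zero (hns : ¬ IsSquare a) (hs : s ^ 2 = algebraMap F K a) (x : F) :
    algebraMap F K x + s ≠ 0 := by
  intro h
  exact s_not_range a s hns hs (-x) (by rw [map_neg]; linear_combination h)

theorem sub_s_ne_zero (hns : ¬ IsSquare a) (hs : s ^ 2 = algebraMap F K a) (x : F) :
    algebraMap F K x - s ≠ 0 := by
  intro h
  exact s_not_range a s hns hs x (by linear_combination -h)


theorem redei_coeff_eq (n : ℕ) (x : F) (hs : s ^ 2 = algebraMap F K a) :
    (algebraMap F K x + s) ^ n =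
      algebraMap F K (((C x + X) ^ n %ₘ (X ^ 2 - C a)).coeff 0)
      + algebraMap F K (((C x + X) ^ n %ₘ (X ^ 2 - C a)).coeff 1) * s := by
  have hm : (X ^ 2 - C a : F[X]).Monic := monic_X_pow_sub_C a (by norm_num)
  set p : F[X] := (C x + X) ^ n with hp
  set r : F[X] := p %ₘ (X ^ 2 - C a) with hr
  have hdeg : r.degree ≤ 1 := by
    have h2 : (X ^ 2 - C a : F[X]).degree = 2 := by
      simpa using degree_X_pow_sub_C (by norm_num : 0 < 2) a
    have := degree_modByMonic_lt p hm
    rw [h2] at this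
    exact Order.le_of_lt_succ (by exact_mod_cast this)
  have hrepr : r = C (r.coeff 1) * X + C (r.coeff 0) := eq_X_add_C_of_degree_le_one hdeg
  have hker : (aeval s) (X ^ 2 - C a : F[X]) = 0 := by
    simp [hs]
  have key : (aeval s) p = (aeval s) r := by
    rw [hr, modByMonic_eq_sub_mul_div p (X ^ 2 - C a), map_sub, map_mul, hker, zero_mul, sub_zero]
  have h1 : (aeval s) p = (algebraMap F K x + s) ^ n := by
    rw [hp, map_pow, map_add, aeval_C, aeval_X]
  have h2 : (aeval s) r = algebraMap F K (r.coeff 0) + algebraMap F K (r.coeff 1) * s := by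
    conv_lhs => rw [hrepr]
    rw [map_add, map_mul, aeval_C, aeval_C, aeval_X]
    ring
  rw [← h1, key, h2]


theorem a_pow_half (q : ℕ) (hq : Fintype.card F = q) (hodd : Odd q)
    (ha : a ≠ 0) (hns : ¬ IsSquare a) : a ^ (q / 2) = -1 := by
  have hc := char_ne_two (F := F) q hq hodd
  rcases FiniteField.pow_dichotomy hc ha with h | h
  · rw [hq] at h
    exact absurd ((FiniteField.isSquare_iff hc ha).mpr (by rw [hq]; exact h)) hns
  · rw [hq] at h; exact h

theorem s_pow_q (q : ℕ) (hq : Fintype.card F = q) (hodd : Odd q)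
    (ha : a ≠ 0) (hns : ¬ IsSquare a) (hs : s ^ 2 = algebraMap F K a) :
    s ^ q = -s := by
  have hq2 : q = 2 * (q / 2) + 1 := by
    rw [Nat.odd_iff] at hodd; omega
  calc s ^ q = (s ^ 2) ^ (q / 2) * s := by
        rw [← pow_mul, ← pow_succ, ← hq2]
    _ = algebraMap F K (a ^ (q / 2)) * s := by rw [hs, map_pow]
    _ = -s := by rw [a_pow_half a q hq hodd ha hns, map_neg, map_one, neg_one_mul]

theorem frob (q : ℕ) (hq : Fintype.card F = q) (hodd : Odd q)
    (ha : a ≠ 0) (hns : ¬ IsSquare a) (hs : s ^ 2 = algebraMap F K a)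
    (u v : F) : (algebraMap F K u + algebraMap F K v * s) ^ q = 
      algebraMap F K u - algebraMap F K v * s := by
  haveI : CharP K (ringChar F) := charP_of_injective_algebraMap (algebraMap F K).injective _
  haveI : Fact (ringChar F).Prime := ⟨CharP.char_is_prime F _⟩
  obtain ⟨m, hp, hcard⟩ := FiniteField.card F (ringChar F)
  rw [hq] at hcard
  rw [hcard, add_pow_char_pow, ← hcard, mul_pow, s_pow_q a s q hq hodd ha hns hs,
    ← map_pow, ← map_pow]
  rw [show u ^ q = u from hq ▸ FiniteField.pow_card u,
    show v ^ q = v from hq ▸ FiniteField.pow_card v]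
  ring


noncomputable def psi (s : K) (x : F) : K :=
  (algebraMap F K x + s) / (algebraMap F K x - s)

theorem psi_ne_zero (hns : ¬ IsSquare a) (hs : s ^ 2 = algebraMap F K a) (x : F) :
    psi s x ≠ 0 :=
  div_ne_zero (add_s_ne_zero a s hns hs x) (sub_s_ne_zero a s hns hs x)

theorem psi_ne_one (q : ℕ) (hq : Fintype.card F = q) (hodd : Odd q)
    (ha : a ≠ 0) (hns : ¬ IsSquare a) (hs : s ^ 2 = algebraMap F K a) (x : F) :
    psi s x ≠ 1 := by
  intro h
  rw [psi, div_eq_one_iff_eq (sub_s_ne_zero a s hns hs x)] at h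
  have h2 : (2 : K) * s = 0 := by linear_combination h
  rcases mul_eq_zero.mp h2 with h' | h'
  · exact two_ne_zero_K (F := F) q hq hodd h'
  · exact s_ne_zero a s ha hs h'

theorem psi_inj (q : ℕ) (hq : Fintype.card F = q) (hodd : Odd q)
    (ha : a ≠ 0) (hns : ¬ IsSquare a) (hs : s ^ 2 = algebraMap F K a) {x y : F}
    (h : psi s x = psi s y) : x = y := by
  rw [psi, psi, div_eq_div_iff (sub_s_ne_zero a s hns hs x) (sub_s_ne_zero a s hns hs y)] at h
  have h2 : (2 : K) * s * (algebraMap F K y - algebraMap F K x) = 0 := by linear_combination h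
  rcases mul_eq_zero.mp h2 with h' | h'
  · rcases mul_eq_zero.mp h' with h'' | h''
    · exact absurd h'' (two_ne_zero_K (F := F) q hq hodd)
    · exact absurd h'' (s_ne_zero a s ha hs)
  · have := sub_eq_zero.mp h'
    exact ((algebraMap F K).injective this).symm

theorem psi_pow_q (q : ℕ) (hq : Fintype.card F = q) (hodd : Odd q)
    (ha : a ≠ 0) (hns : ¬ IsSquare a) (hs : s ^ 2 = algebraMap F K a) (x : F) :
    psi s x ^ q = (algebraMap F K x - s) / (algebraMap F K x + s) := by
  have h1 : (algebraMap F K x + s) ^ q = algebraMap F K x - s := by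
    have := frob a s q hq hodd ha hns hs x 1
    simpa using this
  have h2 : (algebraMap F K x - s) ^ q = algebraMap F K x + s := by
    have := frob a s q hq hodd ha hns hs x (-1)
    simp only [map_neg, map_one, neg_one_mul, sub_neg_eq_add] at this
    rw [← this]
    ring_nf
  rw [psi, div_pow, h1, h2]

theorem psi_norm (q : ℕ) (hq : Fintype.card F = q) (hodd : Odd q)
    (ha : a ≠ 0) (hns : ¬ IsSquare a) (hs : s ^ 2 = algebraMap F K a) (x : F) :
    psi s x ^ (q + 1) = 1 := by
  rw [pow_succ, psi_pow_q a s q hq hodd ha hns hs, psi]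
  rw [div_mul_div_comm, mul_comm]
  exact div_self (mul_ne_zero (add_s_ne_zero a s hns hs x) (sub_s_ne_zero a s hns hs x))


theorem denom_eq (q n : ℕ) (hq : Fintype.card F = q) (hodd : Odd q)
    (ha : a ≠ 0) (hns : ¬ IsSquare a) (hs : s ^ 2 = algebraMap F K a) (x : F) :
    (algebraMap F K x - s) ^ n =
      algebraMap F K (((C x + X) ^ n %ₘ (X ^ 2 - C a)).coeff 0)
      - algebraMap F K (((C x + X) ^ n %ₘ (X ^ 2 - C a)).coeff 1) * s := by
  have h1 : (algebraMap F K x + s) ^ q = algebraMap F K x - s := by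
    simpa using frob a s q hq hodd ha hns hs x 1
  rw [← h1, ← pow_mul, mul_comm, pow_mul, redei_coeff_eq a s n x hs]
  exact frob a s q hq hodd ha hns hs _ _

theorem H_ne_zero (q n : ℕ) (hq : Fintype.card F = q) (hodd : Odd q)
    (ha : a ≠ 0) (hns : ¬ IsSquare a) (hs : s ^ 2 = algebraMap F K a)
    (hcop : Nat.Coprime n (q + 1)) (x : F) :
    ((C x + X) ^ n %ₘ (X ^ 2 - C a)).coeff 1 ≠ 0 := by
  intro h
  have hnum := redei_coeff_eq a s n x hs
  rw [h, map_zero, zero_mul, add_zero] at hnum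
  have hden := denom_eq a s q n hq hodd ha hns hs x
  rw [h, map_zero, zero_mul, sub_zero] at hden
  have hc0 : algebraMap F K (((C x + X) ^ n %ₘ (X ^ 2 - C a)).coeff 0) ≠ 0 :=
    hnum ▸ pow_ne_zero n (add_s_ne_zero a s hns hs x)
  have hpow : psi s x ^ n = 1 := by
    rw [psi, div_pow, hnum, hden, div_self hc0]
  have hord : orderOf (psi s x) ∣ Nat.gcd n (q + 1) :=
    Nat.dvd_gcd (orderOf_dvd_of_pow_eq_one hpow)
      (orderOf_dvd_of_pow_eq_one (psi_norm a s q hq hodd ha hns hs x))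
  rw [hcop] at hord
  exact psi_ne_one a s q hq hodd ha hns hs x (orderOf_eq_one_iff.mp (Nat.dvd_one.mp hord))

theorem psi_redei (q n : ℕ) (hq : Fintype.card F = q) (hodd : Odd q)
    (ha : a ≠ 0) (hns : ¬ IsSquare a) (hs : s ^ 2 = algebraMap F K a)
    (hcop : Nat.Coprime n (q + 1)) (x : F) :
    psi s (redeiFun a n x) = psi s x ^ n := by
  set c0 := ((C x + X) ^ n %ₘ (X ^ 2 - C a)).coeff 0 with hc0def
  set c1 := ((C x + X) ^ n %ₘ (X ^ 2 - C a)).coeff 1 with hc1def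
  have h1 : c1 ≠ 0 := H_ne_zero a s q n hq hodd ha hns hs hcop x
  have hnum : (algebraMap F K x + s) ^ n = algebraMap F K c0 + algebraMap F K c1 * s :=
    redei_coeff_eq a s n x hs
  have hden : (algebraMap F K x - s) ^ n = algebraMap F K c0 - algebraMap F K c1 * s :=
    denom_eq a s q n hq hodd ha hns hs x
  have hc1 : algebraMap F K c1 ≠ 0 := fun h =>
    h1 ((algebraMap F K).injective (by simpa using h))
  have hd2 : algebraMap F K c0 - algebraMap F K c1 * s ≠ 0 := by
    rw [← hden]; exact pow_ne_zero _ (sub_s_ne_zero a s hns hs x)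
  have hredei : redeiFun a n x = c0 / c1 := rfl
  have hden2 : algebraMap F K (c0 / c1) - s ≠ 0 := sub_s_ne_zero a s hns hs _
  rw [hredei, psi, psi, div_pow, hnum, hden, div_eq_div_iff hden2 hd2, map_div₀]
  field_simp


theorem psi_iter (q n : ℕ) (hq : Fintype.card F = q) (hodd : Odd q)
    (ha : a ≠ 0) (hns : ¬ IsSquare a) (hs : s ^ 2 = algebraMap F K a)
    (hcop : Nat.Coprime n (q + 1)) (m : ℕ) (x : F) :
    psi s ((redeiFun a n)^[m] x) = psi s x ^ n ^ m := by
  induction m with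
  | zero => simp
  | succ k ih =>
    rw [Function.iterate_succ_apply', psi_redei a s q n hq hodd ha hns hs hcop, ih,
      ← pow_mul, pow_succ]

theorem fixed_iff (q n : ℕ) (hq : Fintype.card F = q) (hodd : Odd q)
    (ha : a ≠ 0) (hns : ¬ IsSquare a) (hs : s ^ 2 = algebraMap F K a)
    (hn : 0 < n) (hcop : Nat.Coprime n (q + 1)) (m : ℕ) (x : F) :
    (redeiFun a n)^[m] x = x ↔ psi s x ^ (n ^ m - 1) = 1 := by
  have hnm : n ^ m = (n ^ m - 1) + 1 := by
    have := Nat.one_le_pow m n hn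
    omega
  constructor
  · intro h
    have h2 : psi s x ^ n ^ m = psi s x :=
      (psi_iter a s q n hq hodd ha hns hs hcop m x).symm.trans (by rw [h])
    rw [hnm, pow_succ] at h2
    have := mul_right_cancel₀ (psi_ne_zero a s hns hs x) (h2.trans (one_mul (psi s x)).symm)
    exact this
  · intro h
    apply psi_inj a s q hq hodd ha hns hs
    rw [psi_iter a s q n hq hodd ha hns hs hcop m x, hnm, pow_succ, h, one_mul]

theorem exists_preimage [Fintype K] (q : ℕ) (hq : Fintype.card F = q) (y : K)
    (hy : y ^ q = y) : ∃ x : F, algebraMap F K x = y := by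
  classical
  have h1q : 1 < q := hq ▸ Fintype.one_lt_card
  set P : K[X] := X ^ q - X with hP
  have hdlt : (X : K[X]).degree < (X ^ q : K[X]).degree := by
    rw [degree_X, degree_X_pow]; exact_mod_cast h1q
  have hdeg : P.degree = q := by rw [hP, degree_sub_eq_left_of_degree_lt hdlt, degree_X_pow]
  have hP0 : P ≠ 0 := fun h => by rw [h, degree_zero] at hdeg; simp at hdeg
  have hnd : P.natDegree = q := natDegree_eq_of_degree_eq_some hdeg
  set T : Finset K := Finset.univ.image (algebraMap F K) with hT
  have hTcard : T.card = q := by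
    rw [hT, Finset.card_image_of_injective _ (algebraMap F K).injective, Finset.card_univ, hq]
  have hsub : T ⊆ P.roots.toFinset := by
    intro t ht
    rw [hT, Finset.mem_image] at ht
    obtain ⟨x, -, rfl⟩ := ht
    rw [Multiset.mem_toFinset, mem_roots hP0]
    simp only [hP, IsRoot.def, eval_sub, eval_pow, eval_X]
    rw [← map_pow, show x ^ q = x from hq ▸ FiniteField.pow_card x, sub_self]
  have hle : P.roots.toFinset.card ≤ q := le_trans (Multiset.toFinset_card_le _) (hnd ▸ P.card_roots')
  have heq : T = P.roots.toFinset := Finset.eq_of_subset_of_card_le hsub (by omega)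
  have hyr : y ∈ P.roots.toFinset := by
    rw [Multiset.mem_toFinset, mem_roots hP0]
    simp [hP, IsRoot.def, hy]
  rw [← heq, hT, Finset.mem_image] at hyr
  obtain ⟨x, -, hx⟩ := hyr
  exact ⟨x, hx⟩

theorem add_pow_q (q : ℕ) (hq : Fintype.card F = q) (u v : K) :
    (u + v) ^ q = u ^ q + v ^ q := by
  haveI : CharP K (ringChar F) := charP_of_injective_algebraMap (algebraMap F K).injective _
  haveI : Fact (ringChar F).Prime := ⟨CharP.char_is_prime F _⟩
  obtain ⟨m, hp, hcard⟩ := FiniteField.card F (ringChar F)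
  rw [hq] at hcard
  rw [hcard, add_pow_char_pow]

theorem psi_surj [Fintype K] (q : ℕ) (hq : Fintype.card F = q) (hodd : Odd q)
    (ha : a ≠ 0) (hns : ¬ IsSquare a) (hs : s ^ 2 = algebraMap F K a)
    (z : K) (hz1 : z ^ (q + 1) = 1) (hz2 : z ≠ 1) : ∃ x : F, psi s x = z := by
  have hz0 : z ≠ 0 := fun h => by simp [h] at hz1
  have hzm1 : z - 1 ≠ 0 := sub_ne_zero.mpr hz2
  have hs0 : s ≠ 0 := s_ne_zero a s ha hs
  have h2 : (2 : K) ≠ 0 := two_ne_zero_K (F := F) q hq hodd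
  have hzq : z ^ q = z⁻¹ := by
    have : z ^ q * z = 1 := by rw [← pow_succ]; exact hz1
    field_simp at this ⊢
    linear_combination this
  have hy : (s * (z + 1) / (z - 1)) ^ q = s * (z + 1) / (z - 1) := by
    have e1 : (z + 1) ^ q = z⁻¹ + 1 := by
      rw [add_pow_q (F := F) q hq, hzq, one_pow]
    have e2 : (z - 1) ^ q = z⁻¹ - 1 := by
      rw [sub_eq_add_neg, add_pow_q (F := F) q hq, hzq, Odd.neg_one_pow hodd, ← sub_eq_add_neg]
    have e3 : z⁻¹ - 1 ≠ 0 := by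
      intro h
      apply hz2
      have : z⁻¹ = 1 := by linear_combination h
      rw [← inv_inv z, this, inv_one]
    rw [div_pow, mul_pow, e1, e2, s_pow_q a s q hq hodd ha hns hs]
    rw [div_eq_div_iff e3 hzm1]
    field_simp
    ring
  obtain ⟨x, hx⟩ := exists_preimage (F := F) q hq _ hy
  refine ⟨x, ?_⟩
  have hys : algebraMap F K x - s ≠ 0 := sub_s_ne_zero a s hns hs x
  rw [psi, div_eq_iff hys, hx]
  field_simp
  ring


theorem card_pow_eq_one (L : Type*) [Field L] [Fintype L] (g : ℕ) (hg : 0 < g)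
    (hdvd : g ∣ Fintype.card L - 1) :
    Nat.card {z : L // z ^ g = 1} = g := by
  classical
  obtain ⟨u, hu⟩ := IsCyclic.exists_ofOrder_eq_natCard (α := Lˣ)
  have hN0 : 0 < Fintype.card L - 1 := by
    have := Fintype.one_lt_card (α := L)
    omega
  have hcard : orderOf u = Fintype.card L - 1 := by
    rw [hu, Nat.card_eq_fintype_card, Fintype.card_units]
  have hord : orderOf (u ^ ((Fintype.card L - 1) / g)) = g := by
    rw [orderOf_pow, hcard, Nat.gcd_eq_right (Nat.div_dvd_of_dvd hdvd),
      Nat.div_div_self hdvd (by omega)]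
  have hordK : orderOf ((u : L) ^ ((Fintype.card L - 1) / g)) = g := by
    rw [← Units.val_pow_eq_pow_val, orderOf_units, hord]
  have hprim : IsPrimitiveRoot ((u : L) ^ ((Fintype.card L - 1) / g)) g :=
    by
      have h' := IsPrimitiveRoot.orderOf ((u : L) ^ ((Fintype.card L - 1) / g))
      rwa [hordK] at h'
  have hfin : (nthRootsFinset g (1 : L)).card = g := hprim.card_nthRootsFinset
  have e : {z : L // z ^ g = 1} ≃ {z : L // z ∈ nthRootsFinset g (1 : L)} :=
    Equiv.subtypeEquivRight (fun z => (mem_nthRootsFinset hg (1 : L)).symm)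
  rw [Nat.card_congr e, Nat.card_eq_fintype_card, Fintype.card_coe, hfin]

theorem card_pow_eq_one_ne_one (L : Type*) [Field L] [Fintype L] (g : ℕ) (hg : 0 < g)
    (hdvd : g ∣ Fintype.card L - 1) :
    Nat.card {z : L // z ^ g = 1 ∧ z ≠ 1} = g - 1 := by
  classical
  obtain ⟨u, hu⟩ := IsCyclic.exists_ofOrder_eq_natCard (α := Lˣ)
  have hN0 : 0 < Fintype.card L - 1 := by
    have := Fintype.one_lt_card (α := L)
    omega
  have hcard : orderOf u = Fintype.card L - 1 := by
    rw [hu, Nat.card_eq_fintype_card, Fintype.card_units]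
  have hord : orderOf (u ^ ((Fintype.card L - 1) / g)) = g := by
    rw [orderOf_pow, hcard, Nat.gcd_eq_right (Nat.div_dvd_of_dvd hdvd),
      Nat.div_div_self hdvd (by omega)]
  have hordK : orderOf ((u : L) ^ ((Fintype.card L - 1) / g)) = g := by
    rw [← Units.val_pow_eq_pow_val, orderOf_units, hord]
  have hprim : IsPrimitiveRoot ((u : L) ^ ((Fintype.card L - 1) / g)) g :=
    by
      have h' := IsPrimitiveRoot.orderOf ((u : L) ^ ((Fintype.card L - 1) / g))
      rwa [hordK] at h'
  have hfin : (nthRootsFinset g (1 : L)).card = g := hprim.card_nthRootsFinset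
  have h1mem : (1 : L) ∈ nthRootsFinset g (1 : L) := (mem_nthRootsFinset hg (1 : L)).mpr (one_pow g)
  have e : {z : L // z ^ g = 1 ∧ z ≠ 1} ≃ {z : L // z ∈ (nthRootsFinset g (1 : L)).erase 1} :=
    Equiv.subtypeEquivRight (fun z => by
      rw [Finset.mem_erase, mem_nthRootsFinset hg (1 : L)]
      tauto)
  rw [Nat.card_congr e, Nat.card_eq_fintype_card, Fintype.card_coe,
    Finset.card_erase_of_mem h1mem, hfin]


theorem count_fixed [Fintype K] (q n m : ℕ) (hq : Fintype.card F = q)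
    (hK : Fintype.card K = q ^ 2)
    (hodd : Odd q) (ha : a ≠ 0) (hns : ¬ IsSquare a) (hs : s ^ 2 = algebraMap F K a)
    (hn : 0 < n) (hcop : Nat.Coprime n (q + 1)) :
    Nat.card {x : F // (redeiFun a n)^[m] x = x} = Nat.gcd (n ^ m - 1) (q + 1) - 1 := by
  set g := Nat.gcd (n ^ m - 1) (q + 1) with hg
  have hgq : g ∣ q + 1 := Nat.gcd_dvd_right _ _
  have hgm : g ∣ n ^ m - 1 := Nat.gcd_dvd_left _ _
  have hg0 : 0 < g := Nat.gcd_pos_of_pos_right _ (by omega)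
  have hsq : q ^ 2 - 1 = (q + 1) * (q - 1) := by
    have hq1 : 0 < q := by rcases hodd with ⟨t, ht⟩; omega
    obtain ⟨t, rfl⟩ : ∃ t, q = t + 1 := ⟨q - 1, by omega⟩
    have h1 : (t + 1) ^ 2 = (t + 1 + 1) * (t + 1 - 1) + 1 := by
      simp only [Nat.add_sub_cancel]
      ring
    omega
  have hdvd : g ∣ Fintype.card K - 1 := by
    rw [hK, hsq]
    exact hgq.mul_right _
  have e : {x : F // (redeiFun a n)^[m] x = x} ≃ {z : K // z ^ g = 1 ∧ z ≠ 1} := by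
    refine Equiv.ofBijective (fun x => ⟨psi s x.1, ?_, ?_⟩) ⟨?_, ?_⟩
    · have h1 : psi s x.1 ^ (n ^ m - 1) = 1 :=
        (fixed_iff a s q n hq hodd ha hns hs hn hcop m x.1).mp x.2
      have h2 : psi s x.1 ^ (q + 1) = 1 := psi_norm a s q hq hodd ha hns hs x.1
      exact orderOf_dvd_iff_pow_eq_one.mp
        (Nat.dvd_gcd (orderOf_dvd_of_pow_eq_one h1) (orderOf_dvd_of_pow_eq_one h2))
    · exact psi_ne_one a s q hq hodd ha hns hs x.1
    · intro x y hxy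
      exact Subtype.ext (psi_inj a s q hq hodd ha hns hs (congrArg Subtype.val hxy))
    · rintro ⟨z, hz1, hz2⟩
      have hzq : z ^ (q + 1) = 1 := by
        obtain ⟨k, hk⟩ := hgq
        rw [hk, pow_mul, hz1, one_pow]
      obtain ⟨x, hx⟩ := psi_surj a s q hq hodd ha hns hs z hzq hz2
      have hfix : (redeiFun a n)^[m] x = x := by
        rw [fixed_iff a s q n hq hodd ha hns hs hn hcop m x, hx]
        obtain ⟨k, hk⟩ := hgm
        rw [hk, pow_mul, hz1, one_pow]
      exact ⟨⟨x, hfix⟩, Subtype.ext hx⟩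
  rw [Nat.card_congr e]
  exact card_pow_eq_one_ne_one K g hg0 hdvd


theorem count_fixed' (q n m : ℕ) (hq : Fintype.card F = q) (hodd : Odd q)
    (ha : a ≠ 0) (hns : ¬ IsSquare a) (hn : 0 < n) (hcop : Nat.Coprime n (q + 1)) :
    Nat.card {x : F // (redeiFun a n)^[m] x = x} = Nat.gcd (n ^ m - 1) (q + 1) - 1 := by
  have hirr : Irreducible (X ^ 2 - C a : F[X]) :=
    X_pow_sub_C_irreducible_of_prime Nat.prime_two (fun b hb => hns ⟨b, by rw [← hb]; ring⟩)
  haveI : Fact (Irreducible (X ^ 2 - C a : F[X])) := ⟨hirr⟩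
  set K := AdjoinRoot (X ^ 2 - C a : F[X]) with hKdef
  have hne : (X ^ 2 - C a : F[X]) ≠ 0 := hirr.ne_zero
  haveI : Module.Finite F K := (AdjoinRoot.powerBasis hne).finite
  haveI : Finite K := Module.finite_of_finite F
  haveI : Fintype K := Fintype.ofFinite K
  have hfr : Module.finrank F K = 2 := by
    rw [(AdjoinRoot.powerBasis hne).finrank, AdjoinRoot.powerBasis_dim, natDegree_X_pow_sub_C]
  have hK : Fintype.card K = q ^ 2 := by
    rw [Module.card_eq_pow_finrank (K := F) (V := K), hfr, hq]
  have hs : (AdjoinRoot.root (X ^ 2 - C a : F[X])) ^ 2 = algebraMap F K a := by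
    have h0 : (aeval (AdjoinRoot.root (X ^ 2 - C a : F[X]))) (X ^ 2 - C a : F[X]) = 0 := by
      rw [AdjoinRoot.aeval_eq, AdjoinRoot.mk_self]
    rw [map_sub, map_pow, aeval_X, aeval_C] at h0
    exact sub_eq_zero.mp h0
  exact count_fixed a _ q n m hq hK hodd ha hns hs hn hcop

end RedeiAux

theorem stmt_16 {F : Type*} [Field F] [Fintype F] (q n j : ℕ) (a : F)
    (hq : Fintype.card F = q) (hodd : Odd q) (ha : a ≠ 0) (hns : ¬ IsSquare a)
    (hn : 0 < n) (hcop : Nat.Coprime n (q + 1)) (hj : 0 < j)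
    (N : ℕ → ℕ)
    (hN : ∀ i, i * N i =
      Nat.card {x : F // Function.minimalPeriod (redeiFun a n) x = i}) :
    j * N j + (∑ i ∈ Nat.properDivisors j, i * N i) + 1 =
      Nat.gcd (n ^ j - 1) (q + 1) := by
  classical
  set f := redeiFun a n with hf
  have hcount : Nat.card {x : F // f^[j] x = x} = Nat.gcd (n ^ j - 1) (q + 1) - 1 :=
    RedeiAux.count_fixed' a q n j hq hodd ha hns hn hcop
  have key : Nat.card {x : F // f^[j] x = x}
      = ∑ i ∈ Nat.divisors j, Nat.card {x : F // Function.minimalPeriod f x = i} := by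
    rw [Nat.card_eq_fintype_card, Fintype.card_subtype]
    have h1 : (Finset.univ.filter fun x : F => f^[j] x = x).card
        = ∑ i ∈ Nat.divisors j,
            ((Finset.univ.filter fun x : F => f^[j] x = x).filter
              (fun x => Function.minimalPeriod f x = i)).card := by
      apply Finset.card_eq_sum_card_fiberwise
      intro x hx
      rw [Finset.mem_coe, Finset.mem_filter] at hx
      rw [Finset.mem_coe, Nat.mem_divisors]
      exact ⟨Function.isPeriodicPt_iff_minimalPeriod_dvd.mp hx.2, hj.ne'⟩
    rw [h1]
    apply Finset.sum_congr rfl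
    intro i hi
    rw [Nat.card_eq_fintype_card, Fintype.card_subtype]
    congr 1
    ext x
    simp only [Finset.mem_filter, Finset.mem_univ, true_and]
    constructor
    · exact fun h => h.2
    · intro h
      refine ⟨?_, h⟩
      rw [Nat.mem_divisors] at hi
      exact Function.isPeriodicPt_iff_minimalPeriod_dvd.mpr (h ▸ hi.1)
  have hsumN : ∑ i ∈ Nat.divisors j, i * N i = Nat.gcd (n ^ j - 1) (q + 1) - 1 := by
    rw [Finset.sum_congr rfl (fun i _ => hN i), ← key, hcount]
  have hsplit : ∑ i ∈ Nat.divisors j, i * N i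
      = (∑ i ∈ Nat.properDivisors j, i * N i) + j * N j := by
    rw [← Nat.cons_self_properDivisors hj.ne', Finset.sum_cons, add_comm]
  have hgcd0 : 0 < Nat.gcd (n ^ j - 1) (q + 1) := Nat.gcd_pos_of_pos_right _ (by omega)
  omega
end

section
/- Let q be an odd prime power, a a non-square in F_q^*, and gcd(n, q+1) = 1. The Rédei permutation R_n(·, a) of F_q has all cycles of length j or 1 if and only if for every divisor s of q+1, either n ≡ 1 (mod s) or the multiplicative order of n modulo s equals j. -/
open Polynomial

namespace Stmt17Aux

variable {F : Type*} [Field F] {a : F}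

theorem irr (hns : ¬ IsSquare a) : Irreducible (X ^ 2 - C a) :=
  X_pow_sub_C_irreducible_of_prime Nat.prime_two fun b hb => hns ⟨b, by rw [← hb]; ring⟩

noncomputable abbrev Kk (a : F) := AdjoinRoot (X ^ 2 - C a)

variable [Fact (Irreducible (X ^ 2 - C a : F[X]))]

noncomputable def phi (a : F) [Fact (Irreducible (X ^ 2 - C a : F[X]))] (x : F) : Kk a :=
  (algebraMap F (Kk a) x + AdjoinRoot.root _) / (algebraMap F (Kk a) x - AdjoinRoot.root _)

theorem root_sq : (AdjoinRoot.root (X ^ 2 - C a)) ^ 2 = algebraMap F (Kk a) a := by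
  have h : (AdjoinRoot.mk (X ^ 2 - C a)) (X ^ 2 - C a) = 0 := AdjoinRoot.mk_self
  rw [map_sub, map_pow, AdjoinRoot.mk_X, AdjoinRoot.mk_C, sub_eq_zero] at h
  rw [h, AdjoinRoot.algebraMap_eq]

theorem iota_inj : Function.Injective (algebraMap F (Kk a)) :=
  (algebraMap F (Kk a)).injective

theorem sub_root_ne_zero (hns : ¬ IsSquare a) (x : F) :
    algebraMap F (Kk a) x - AdjoinRoot.root (X ^ 2 - C a) ≠ 0 := by
  intro h
  rw [sub_eq_zero] at h
  apply hns
  refine ⟨x, iota_inj (a := a) ?_⟩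
  rw [map_mul, ← sq, h, root_sq]

theorem add_root_ne_zero (hns : ¬ IsSquare a) (x : F) :
    algebraMap F (Kk a) x + AdjoinRoot.root (X ^ 2 - C a) ≠ 0 := by
  intro h
  rw [add_eq_zero_iff_eq_neg] at h
  apply hns
  refine ⟨-x, iota_inj (a := a) ?_⟩
  rw [map_mul, ← sq, map_neg, h, ← root_sq]
  ring

end Stmt17Aux

namespace Stmt17Aux
variable {F : Type*} [Field F] [Fintype F] {a : F} {q : ℕ}

theorem ringChar_ne_two (hq : Fintype.card F = q) (hodd : Odd q) : ringChar F ≠ 2 := by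
  intro h2
  haveI : CharP F (ringChar F) := ringChar.charP F
  obtain ⟨k, hp, hcard⟩ := FiniteField.card F (ringChar F)
  rw [h2] at hcard
  rw [hcard] at hq
  rw [← hq] at hodd
  have : Even (2 ^ (k : ℕ)) := (Nat.even_pow).mpr ⟨even_two, k.pos.ne'⟩
  exact (Nat.not_even_iff_odd.mpr hodd) this

theorem nonsq_pow (hq : Fintype.card F = q) (hodd : Odd q) (ha : a ≠ 0)
    (hns : ¬ IsSquare a) : a ^ (q / 2) = -1 := by
  have h1 : a ^ (q / 2) ≠ 1 := by
    intro h
    exact hns ((FiniteField.isSquare_iff (ringChar_ne_two hq hodd) ha).mpr (by rw [hq]; exact h))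
  have h2 : (a ^ (q / 2)) ^ 2 = 1 := by
    rw [← pow_mul]
    obtain ⟨m, hm⟩ := hodd
    have : q / 2 * 2 = q - 1 := by omega
    rw [this, ← hq]
    exact FiniteField.pow_card_sub_one_eq_one a ha
  have h3 : (a ^ (q / 2) - 1) * (a ^ (q / 2) + 1) = (a ^ (q / 2)) ^ 2 - 1 := by ring
  rw [h2, sub_self] at h3
  rcases mul_eq_zero.mp h3 with h | h
  · exact absurd (sub_eq_zero.mp h) h1
  · exact eq_neg_of_add_eq_zero_left h

end Stmt17Aux

namespace Stmt17Aux
variable {F : Type*} [Field F] [Fintype F] {a : F} {q : ℕ}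
  [Fact (Irreducible (X ^ 2 - C a : F[X]))]

theorem root_pow_card (hq : Fintype.card F = q) (hodd : Odd q) (ha : a ≠ 0)
    (hns : ¬ IsSquare a) :
    (AdjoinRoot.root (X ^ 2 - C a)) ^ q = -(AdjoinRoot.root (X ^ 2 - C a)) := by
  obtain ⟨m, hm⟩ := id hodd
  have hm2 : q / 2 = m := by omega
  have h3 : (AdjoinRoot.root (X ^ 2 - C a) : Kk a) ^ q
      = ((AdjoinRoot.root (X ^ 2 - C a)) ^ 2) ^ m * AdjoinRoot.root (X ^ 2 - C a) := by
    rw [← pow_mul, ← pow_succ]; congr 1 <;> omega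
  rw [h3, root_sq, ← map_pow, ← hm2, nonsq_pow hq hodd ha hns, map_neg, map_one]
  ring

theorem add_root_pow_card (hq : Fintype.card F = q) (hodd : Odd q) (ha : a ≠ 0)
    (hns : ¬ IsSquare a) (x : F) :
    (algebraMap F (Kk a) x + AdjoinRoot.root (X ^ 2 - C a)) ^ q
      = algebraMap F (Kk a) x - AdjoinRoot.root (X ^ 2 - C a) := by
  haveI : CharP F (ringChar F) := ringChar.charP F
  obtain ⟨k, hp, hcard⟩ := FiniteField.card F (ringChar F)
  haveI : Fact (ringChar F).Prime := ⟨hp⟩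
  haveI : CharP (Kk a) (ringChar F) := charP_of_injective_algebraMap (iota_inj (a := a)) _
  have hqq : q = ringChar F ^ (k : ℕ) := by rw [← hq, hcard]
  have hfrob : (algebraMap F (Kk a) x + AdjoinRoot.root (X ^ 2 - C a)) ^ q
      = (algebraMap F (Kk a) x) ^ q + (AdjoinRoot.root (X ^ 2 - C a)) ^ q := by
    rw [hqq]; exact add_pow_char_pow _ _ (ringChar F) k
  have h1 : (algebraMap F (Kk a) x) ^ q = algebraMap F (Kk a) x := by
    rw [← map_pow, ← hq, FiniteField.pow_card]
  rw [hfrob, h1, root_pow_card hq hodd ha hns]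
  ring

theorem sub_root_pow_card (hq : Fintype.card F = q) (hodd : Odd q) (ha : a ≠ 0)
    (hns : ¬ IsSquare a) (x : F) :
    (algebraMap F (Kk a) x - AdjoinRoot.root (X ^ 2 - C a)) ^ q
      = algebraMap F (Kk a) x + AdjoinRoot.root (X ^ 2 - C a) := by
  haveI : CharP F (ringChar F) := ringChar.charP F
  obtain ⟨k, hp, hcard⟩ := FiniteField.card F (ringChar F)
  haveI : Fact (ringChar F).Prime := ⟨hp⟩
  haveI : CharP (Kk a) (ringChar F) := charP_of_injective_algebraMap (iota_inj (a := a)) _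
  have hqq : q = ringChar F ^ (k : ℕ) := by rw [← hq, hcard]
  have hfrob : (algebraMap F (Kk a) x - AdjoinRoot.root (X ^ 2 - C a)) ^ q
      = (algebraMap F (Kk a) x) ^ q + (-(AdjoinRoot.root (X ^ 2 - C a))) ^ q := by
    have hsub : algebraMap F (Kk a) x - AdjoinRoot.root (X ^ 2 - C a)
        = algebraMap F (Kk a) x + -(AdjoinRoot.root (X ^ 2 - C a)) := sub_eq_add_neg _ _
    rw [hsub, hqq]; exact add_pow_char_pow _ _ (ringChar F) k
  have h1 : (algebraMap F (Kk a) x) ^ q = algebraMap F (Kk a) x := by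
    rw [← map_pow, ← hq, FiniteField.pow_card]
  rw [hfrob, h1, hodd.neg_pow, root_pow_card hq hodd ha hns]
  ring

end Stmt17Aux

namespace Stmt17Aux
variable {F : Type*} [Field F] [Fintype F] {a : F} {q : ℕ}
  [Fact (Irreducible (X ^ 2 - C a : F[X]))]

theorem root_ne_zero (ha : a ≠ 0) : (AdjoinRoot.root (X ^ 2 - C a) : Kk a) ≠ 0 := by
  intro h
  apply ha
  have := root_sq (a := a)
  rw [h] at this
  simpa using (iota_inj (a := a) (by simpa using this.symm))

theorem two_ne_zero_K (hq : Fintype.card F = q) (hodd : Odd q) : (2 : Kk a) ≠ 0 := by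
  haveI : CharP F (ringChar F) := ringChar.charP F
  haveI : CharP (Kk a) (ringChar F) := charP_of_injective_algebraMap (iota_inj (a := a)) _
  intro h
  have h2 : (ringChar F) ∣ 2 := (CharP.cast_eq_zero_iff (Kk a) (ringChar F) 2).mp (by exact_mod_cast h)
  obtain ⟨k, hp, hcard⟩ := FiniteField.card F (ringChar F)
  have : ringChar F = 2 := (Nat.prime_dvd_prime_iff_eq hp Nat.prime_two).mp h2
  exact ringChar_ne_two hq hodd this

theorem phi_ne_zero (hns : ¬ IsSquare a) (x : F) : phi a x ≠ 0 :=
  div_ne_zero (add_root_ne_zero hns x) (sub_root_ne_zero hns x)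

theorem phi_ne_one (hq : Fintype.card F = q) (hodd : Odd q) (ha : a ≠ 0)
    (hns : ¬ IsSquare a) (x : F) : phi a x ≠ 1 := by
  intro h
  rw [phi, div_eq_one_iff_eq (sub_root_ne_zero hns x)] at h
  have h2 : (2 : Kk a) * AdjoinRoot.root (X ^ 2 - C a) = 0 := by
    rw [two_mul]
    linear_combination h
  rcases mul_eq_zero.mp h2 with h | h
  · exact two_ne_zero_K hq hodd h
  · exact root_ne_zero ha h

theorem phi_injective (hq : Fintype.card F = q) (hodd : Odd q) (ha : a ≠ 0)
    (hns : ¬ IsSquare a) : Function.Injective (phi a) := by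
  intro x y h
  rw [phi, phi, div_eq_div_iff (sub_root_ne_zero hns x) (sub_root_ne_zero hns y)] at h
  have h2 : (2 : Kk a) * AdjoinRoot.root (X ^ 2 - C a)
      * (algebraMap F (Kk a) y - algebraMap F (Kk a) x) = 0 := by
    linear_combination h
  rcases mul_eq_zero.mp h2 with h3 | h3
  · rcases mul_eq_zero.mp h3 with h4 | h4
    · exact absurd h4 (two_ne_zero_K hq hodd)
    · exact absurd h4 (root_ne_zero ha)
  · rw [sub_eq_zero] at h3
    exact (iota_inj (a := a) h3.symm)

theorem phi_pow_card_succ (hq : Fintype.card F = q) (hodd : Odd q) (ha : a ≠ 0)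
    (hns : ¬ IsSquare a) (x : F) : (phi a x) ^ (q + 1) = 1 := by
  rw [phi, div_pow, div_eq_one_iff_eq (pow_ne_zero _ (sub_root_ne_zero hns x))]
  conv_lhs => rw [pow_succ, add_root_pow_card hq hodd ha hns x]
  conv_rhs => rw [pow_succ, sub_root_pow_card hq hodd ha hns x]
  ring

end Stmt17Aux

namespace Stmt17Aux
variable {F : Type*} [Field F] {a : F}
  [Fact (Irreducible (X ^ 2 - C a : F[X]))]

theorem aeval_rep (x : F) (n : ℕ) :
    (algebraMap F (Kk a) x + AdjoinRoot.root (X ^ 2 - C a)) ^ n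
      = algebraMap F (Kk a) (((C x + X) ^ n %ₘ (X ^ 2 - C a)).coeff 0)
        + algebraMap F (Kk a) (((C x + X) ^ n %ₘ (X ^ 2 - C a)).coeff 1)
          * AdjoinRoot.root (X ^ 2 - C a) := by
  have hmonic : (X ^ 2 - C a).Monic := monic_X_pow_sub_C a two_ne_zero
  have hne1 : (X ^ 2 - C a : F[X]) ≠ 1 := by
    intro h
    have := congrArg natDegree h
    rw [natDegree_X_pow_sub_C, natDegree_one] at this
    omega
  have hdeg : (((C x + X) ^ n %ₘ (X ^ 2 - C a)).natDegree ≤ 1) := by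
    have h := natDegree_modByMonic_lt ((C x + X) ^ n) hmonic hne1
    rw [natDegree_X_pow_sub_C] at h
    omega
  have hrep := eq_X_add_C_of_natDegree_le_one hdeg
  have hmk : (AdjoinRoot.mk (X ^ 2 - C a)) ((C x + X) ^ n %ₘ (X ^ 2 - C a))
      = (AdjoinRoot.mk (X ^ 2 - C a)) ((C x + X) ^ n) := by
    conv_rhs => rw [← modByMonic_add_div ((C x + X) ^ n) (X ^ 2 - C a)]
    rw [map_add, map_mul, AdjoinRoot.mk_self, zero_mul, add_zero]
  have e1 : (AdjoinRoot.mk (X ^ 2 - C a)) ((C x + X) ^ n)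
      = (algebraMap F (Kk a) x + AdjoinRoot.root (X ^ 2 - C a)) ^ n := by
    rw [map_pow, map_add, AdjoinRoot.mk_C, AdjoinRoot.mk_X, AdjoinRoot.algebraMap_eq]
  rw [← e1, ← hmk]
  conv_lhs => rw [hrep]
  rw [map_add, map_mul, AdjoinRoot.mk_C, AdjoinRoot.mk_C, AdjoinRoot.mk_X,
    AdjoinRoot.algebraMap_eq]
  ring

noncomputable def conj (a : F) [Fact (Irreducible (X ^ 2 - C a : F[X]))] : Kk a →+* Kk a :=
  AdjoinRoot.lift (algebraMap F (Kk a)) (-(AdjoinRoot.root (X ^ 2 - C a))) (by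
    rw [eval₂_sub, eval₂_pow, eval₂_X, eval₂_C, neg_pow]
    simp [root_sq, ← AdjoinRoot.algebraMap_eq])

theorem conj_algebraMap (y : F) : conj a (algebraMap F (Kk a) y) = algebraMap F (Kk a) y := by
  rw [AdjoinRoot.algebraMap_eq]; exact AdjoinRoot.lift_of _

theorem conj_root : conj a (AdjoinRoot.root (X ^ 2 - C a)) = -(AdjoinRoot.root (X ^ 2 - C a)) :=
  AdjoinRoot.lift_root _

theorem sub_aeval_rep (x : F) (n : ℕ) :
    (algebraMap F (Kk a) x - AdjoinRoot.root (X ^ 2 - C a)) ^ n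
      = algebraMap F (Kk a) (((C x + X) ^ n %ₘ (X ^ 2 - C a)).coeff 0)
        - algebraMap F (Kk a) (((C x + X) ^ n %ₘ (X ^ 2 - C a)).coeff 1)
          * AdjoinRoot.root (X ^ 2 - C a) := by
  have h := congrArg (conj a) (aeval_rep x n)
  rw [map_pow, map_add, map_add, map_mul, conj_algebraMap, conj_algebraMap, conj_algebraMap,
    conj_root] at h
  rw [sub_eq_add_neg (algebraMap F (Kk a) x) (AdjoinRoot.root (X ^ 2 - C a)), h]
  ring

end Stmt17Aux

namespace Stmt17Aux
variable {F : Type*} [Field F] [Fintype F] {a : F} {q n : ℕ}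
  [Fact (Irreducible (X ^ 2 - C a : F[X]))]

theorem coeff1_ne_zero (hq : Fintype.card F = q) (hodd : Odd q) (ha : a ≠ 0)
    (hns : ¬ IsSquare a) (hcop : Nat.Coprime n (q + 1)) (x : F) :
    ((C x + X) ^ n %ₘ (X ^ 2 - C a)).coeff 1 ≠ 0 := by
  intro h0
  have h1 := aeval_rep (a := a) x n
  rw [h0, map_zero, zero_mul, add_zero] at h1
  have h2 := sub_aeval_rep (a := a) x n
  rw [h0, map_zero, zero_mul, sub_zero] at h2
  have hu : (phi a x) ^ n = 1 := by
    rw [phi, div_pow, h1, h2, div_self]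
    rw [← h2]
    exact pow_ne_zero _ (sub_root_ne_zero hns x)
  have hdvd1 : orderOf (phi a x) ∣ n := orderOf_dvd_of_pow_eq_one hu
  have hdvd2 : orderOf (phi a x) ∣ (q + 1) :=
    orderOf_dvd_of_pow_eq_one (phi_pow_card_succ hq hodd ha hns x)
  have hone : orderOf (phi a x) = 1 :=
    Nat.dvd_one.mp (hcop ▸ Nat.dvd_gcd hdvd1 hdvd2)
  exact phi_ne_one hq hodd ha hns x (orderOf_eq_one_iff.mp hone)

theorem phi_redei (hq : Fintype.card F = q) (hodd : Odd q) (ha : a ≠ 0)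
    (hns : ¬ IsSquare a) (hcop : Nat.Coprime n (q + 1)) (x : F) :
    phi a (redeiFun a n x) = (phi a x) ^ n := by
  have hc1 : ((C x + X) ^ n %ₘ (X ^ 2 - C a)).coeff 1 ≠ 0 :=
    coeff1_ne_zero hq hodd ha hns hcop x
  have hιc1 : algebraMap F (Kk a) (((C x + X) ^ n %ₘ (X ^ 2 - C a)).coeff 1) ≠ 0 := by
    simpa using fun h => hc1 (iota_inj (a := a) (by simpa using h))
  have hden : algebraMap F (Kk a) (((C x + X) ^ n %ₘ (X ^ 2 - C a)).coeff 0)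
      - algebraMap F (Kk a) (((C x + X) ^ n %ₘ (X ^ 2 - C a)).coeff 1)
        * AdjoinRoot.root (X ^ 2 - C a) ≠ 0 := by
    rw [← sub_aeval_rep]
    exact pow_ne_zero _ (sub_root_ne_zero hns x)
  have hstep : phi a (redeiFun a n x)
      = (algebraMap F (Kk a) (((C x + X) ^ n %ₘ (X ^ 2 - C a)).coeff 0)
          + algebraMap F (Kk a) (((C x + X) ^ n %ₘ (X ^ 2 - C a)).coeff 1)
            * AdjoinRoot.root (X ^ 2 - C a))
        / (algebraMap F (Kk a) (((C x + X) ^ n %ₘ (X ^ 2 - C a)).coeff 0)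
          - algebraMap F (Kk a) (((C x + X) ^ n %ₘ (X ^ 2 - C a)).coeff 1)
            * AdjoinRoot.root (X ^ 2 - C a)) := by
    rw [phi, redeiFun, div_eq_div_iff (sub_root_ne_zero hns _) hden, map_div₀]
    rw [AdjoinRoot.algebraMap_eq] at hιc1
    field_simp [hιc1]
  rw [hstep, ← aeval_rep, ← sub_aeval_rep, phi, div_pow]

theorem phi_iterate (hq : Fintype.card F = q) (hodd : Odd q) (ha : a ≠ 0)
    (hns : ¬ IsSquare a) (hcop : Nat.Coprime n (q + 1)) (x : F) (k : ℕ) :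
    phi a ((redeiFun a n)^[k] x) = (phi a x) ^ (n ^ k) := by
  induction k with
  | zero => simp
  | succ k ih =>
    rw [Function.iterate_succ_apply', phi_redei hq hodd ha hns hcop, ih, ← pow_mul, pow_succ n k]

end Stmt17Aux

namespace Stmt17Aux
variable {F : Type*} [Field F] [Fintype F] {a : F} {q n : ℕ}
  [Fact (Irreducible (X ^ 2 - C a : F[X]))]

theorem orderOf_phi_dvd (hq : Fintype.card F = q) (hodd : Odd q) (ha : a ≠ 0)
    (hns : ¬ IsSquare a) (x : F) : orderOf (phi a x) ∣ q + 1 :=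
  orderOf_dvd_of_pow_eq_one (phi_pow_card_succ hq hodd ha hns x)

theorem orderOf_phi_pos (hq : Fintype.card F = q) (hodd : Odd q) (ha : a ≠ 0)
    (hns : ¬ IsSquare a) (x : F) : 0 < orderOf (phi a x) := by
  have hfin : IsOfFinOrder (phi a x) :=
    isOfFinOrder_iff_pow_eq_one.mpr ⟨q + 1, by omega, phi_pow_card_succ hq hodd ha hns x⟩
  exact hfin.orderOf_pos

theorem orderOf_phi_ne_one (hq : Fintype.card F = q) (hodd : Odd q) (ha : a ≠ 0)
    (hns : ¬ IsSquare a) (x : F) : orderOf (phi a x) ≠ 1 := by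
  intro h
  exact phi_ne_one hq hodd ha hns x (orderOf_eq_one_iff.mp h)

theorem minPeriod_eq (hq : Fintype.card F = q) (hodd : Odd q) (ha : a ≠ 0)
    (hns : ¬ IsSquare a) (hcop : Nat.Coprime n (q + 1)) (hn : 0 < n) (x : F) :
    Function.minimalPeriod (redeiFun a n) x
      = orderOf ((n : ZMod (orderOf (phi a x)))) := by
  set d := orderOf (phi a x) with hd
  have hdpos : 0 < d := orderOf_phi_pos hq hodd ha hns x
  have hddvd : d ∣ q + 1 := orderOf_phi_dvd hq hodd ha hns x
  have hcd : Nat.Coprime n d := Nat.Coprime.coprime_dvd_right hddvd hcop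
  haveI : NeZero d := ⟨hdpos.ne'⟩
  set w : (ZMod d)ˣ := ZMod.unitOfCoprime n hcd with hwdef
  have hw : ((w : ZMod d)) = (n : ZMod d) := ZMod.coe_unitOfCoprime n hcd
  have he : orderOf ((n : ZMod d)) = orderOf w := by rw [← hw, orderOf_units]
  have hepos : 0 < orderOf ((n : ZMod d)) := by rw [he]; exact orderOf_pos w
  have key : ∀ k : ℕ, Function.IsPeriodicPt (redeiFun a n) k x ↔ ((n : ZMod d)) ^ k = 1 := by
    intro k
    have h1 : Function.IsPeriodicPt (redeiFun a n) k x ↔ (phi a x) ^ (n ^ k) = phi a x := by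
      constructor
      · intro h
        rw [← phi_iterate hq hodd ha hns hcop x k, h.eq]
      · intro h
        have := phi_injective hq hodd ha hns (a := a)
        exact this (by rw [phi_iterate hq hodd ha hns hcop x k, h])
    have h2 : (phi a x) ^ (n ^ k) = phi a x ↔ (phi a x) ^ (n ^ k - 1) = 1 := by
      have hnk : n ^ k = (n ^ k - 1) + 1 := by
        have := Nat.one_le_pow k n hn
        omega
      constructor
      · intro h
        have h' : (phi a x) * (phi a x) ^ (n ^ k - 1) = (phi a x) * 1 := by
          rw [mul_one, ← pow_succ']
          rw [hnk] at h ⊢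
          exact h
        exact mul_left_cancel₀ (phi_ne_zero hns x) h'
      · intro h
        conv_lhs => rw [hnk, pow_succ', h, mul_one]
    have h3 : (phi a x) ^ (n ^ k - 1) = 1 ↔ d ∣ n ^ k - 1 := (orderOf_dvd_iff_pow_eq_one).symm
    have h4 : d ∣ n ^ k - 1 ↔ ((n : ZMod d)) ^ k = 1 := by
      have hle : 1 ≤ n ^ k := Nat.one_le_pow k n hn
      rw [← Nat.modEq_iff_dvd' hle]
      constructor
      · intro h
        have := (ZMod.natCast_eq_natCast_iff _ _ _).mpr h.symm
        push_cast at this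
        rw [this]
      · intro h
        have : ((n ^ k : ℕ) : ZMod d) = ((1 : ℕ) : ZMod d) := by push_cast; rw [h]
        exact ((ZMod.natCast_eq_natCast_iff _ _ _).mp this).symm
    rw [h1, h2, h3, h4]
  have hper : Function.IsPeriodicPt (redeiFun a n) (orderOf ((n : ZMod d))) x :=
    (key _).mpr (pow_orderOf_eq_one _)
  have hle : Function.minimalPeriod (redeiFun a n) x ≤ orderOf ((n : ZMod d)) :=
    hper.minimalPeriod_le hepos
  have hmpos : 0 < Function.minimalPeriod (redeiFun a n) x :=
    hper.minimalPeriod_pos hepos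
  have hm : ((n : ZMod d)) ^ (Function.minimalPeriod (redeiFun a n) x) = 1 :=
    (key _).mp (Function.isPeriodicPt_minimalPeriod _ _)
  have hdvd : orderOf ((n : ZMod d)) ∣ Function.minimalPeriod (redeiFun a n) x :=
    orderOf_dvd_of_pow_eq_one hm
  exact le_antisymm hle (Nat.le_of_dvd hmpos hdvd)

end Stmt17Aux

namespace Stmt17Aux
variable {F : Type*} [Field F] [Fintype F] {a : F} {q : ℕ}
  [Fact (Irreducible (X ^ 2 - C a : F[X]))]

theorem finiteK : Finite (Kk a) := by
  have hf0 : (X ^ 2 - C a : F[X]) ≠ 0 := (monic_X_pow_sub_C a two_ne_zero).ne_zero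
  haveI : Module.Finite F (Kk a) := (AdjoinRoot.powerBasis hf0).finite
  exact Module.finite_of_finite F

theorem cardK (hq : Fintype.card F = q) :
    ∀ (h : Fintype (Kk a)), @Fintype.card (Kk a) h = q ^ 2 := by
  intro h
  have hf0 : (X ^ 2 - C a : F[X]) ≠ 0 := (monic_X_pow_sub_C a two_ne_zero).ne_zero
  haveI : Module.Finite F (Kk a) := (AdjoinRoot.powerBasis hf0).finite
  have hrank : Module.finrank F (Kk a) = 2 := by
    rw [(AdjoinRoot.powerBasis hf0).finrank, AdjoinRoot.powerBasis_dim, natDegree_X_pow_sub_C]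
  rw [← hq, Module.card_eq_pow_finrank (K := F) (V := Kk a), hrank]

theorem exists_orderOf_eq (hq : Fintype.card F = q) {s : ℕ} (hs : s ∣ q + 1) (hq1 : 2 ≤ q) :
    ∃ u : Kk a, u ^ (q + 1) = 1 ∧ orderOf u = s := by
  haveI : Finite (Kk a) := finiteK
  haveI : Fintype (Kk a) := Fintype.ofFinite _
  have hcard : Nat.card (Kk a)ˣ = q ^ 2 - 1 := by
    rw [Nat.card_eq_fintype_card, Fintype.card_units, cardK hq _]
  have hdvd : (q + 1) ∣ q ^ 2 - 1 := by
    obtain ⟨m, rfl⟩ : ∃ m, q = m + 1 := ⟨q - 1, by omega⟩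
    exact ⟨m, by ring_nf; omega⟩
  obtain ⟨g, hg⟩ := IsCyclic.exists_ofOrder_eq_natCard (α := (Kk a)ˣ)
  have hsd : s ∣ orderOf g := by
    rw [hg, hcard]
    exact hs.trans hdvd
  have hg0 : orderOf g ≠ 0 := by
    rw [hg, hcard]
    have h4 : 4 ≤ q ^ 2 := by nlinarith
    omega
  refine ⟨(g ^ (orderOf g / s) : (Kk a)ˣ), ?_, ?_⟩
  · have horder : orderOf ((g ^ (orderOf g / s)) : (Kk a)ˣ) = s := orderOf_pow_orderOf_div hg0 hsd
    have : orderOf (((g ^ (orderOf g / s)) : (Kk a)ˣ) : Kk a) = s := by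
      rw [orderOf_units, horder]
    exact orderOf_dvd_iff_pow_eq_one.mp (by rw [this]; exact hs)
  · rw [orderOf_units, orderOf_pow_orderOf_div hg0 hsd]

end Stmt17Aux

namespace Stmt17Aux
variable {F : Type*} [Field F] [Fintype F] {a : F} {q : ℕ}
  [Fact (Irreducible (X ^ 2 - C a : F[X]))]

theorem phi_surj (hq : Fintype.card F = q) (hodd : Odd q) (ha : a ≠ 0)
    (hns : ¬ IsSquare a) (u : Kk a) (hu : u ^ (q + 1) = 1) (hu1 : u ≠ 1) :
    ∃ x : F, phi a x = u := by
  classical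
  haveI : Finite (Kk a) := finiteK
  haveI : Fintype (Kk a) := Fintype.ofFinite _
  set S : Finset (Kk a) := Finset.univ.filter (fun v => v ^ (q + 1) = 1) with hS
  have hpoly : ((X : (Kk a)[X]) ^ (q + 1) - 1) ≠ 0 := by
    have : ((X : (Kk a)[X]) ^ (q + 1) - 1) = X ^ (q + 1) - C 1 := by rw [map_one]
    rw [this]
    exact (monic_X_pow_sub_C (1 : Kk a) (by omega)).ne_zero
  have hcardS : S.card ≤ q + 1 := by
    have hsub : S ⊆ ((X : (Kk a)[X]) ^ (q + 1) - 1).roots.toFinset := by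
      intro v hv
      rw [Multiset.mem_toFinset, mem_roots hpoly]
      simp only [hS, Finset.mem_filter] at hv
      simp [IsRoot, hv.2, sub_eq_zero]
    calc S.card ≤ _ := Finset.card_le_card hsub
      _ ≤ Multiset.card ((X : (Kk a)[X]) ^ (q + 1) - 1).roots := Multiset.toFinset_card_le _
      _ ≤ ((X : (Kk a)[X]) ^ (q + 1) - 1).natDegree := Polynomial.card_roots' _
      _ = q + 1 := by
          rw [show ((X : (Kk a)[X]) ^ (q + 1) - 1) = X ^ (q + 1) - C 1 by rw [map_one]]
          exact natDegree_X_pow_sub_C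
  have h1S : (1 : Kk a) ∈ S := by simp [hS]
  set T := S.erase 1 with hT
  have hcardT : T.card ≤ q := by
    rw [hT, Finset.card_erase_of_mem h1S]
    omega
  have himg : Finset.univ.image (phi a) ⊆ T := by
    intro v hv
    obtain ⟨x, _, rfl⟩ := Finset.mem_image.mp hv
    rw [hT, Finset.mem_erase]
    exact ⟨phi_ne_one hq hodd ha hns x, by
      simp only [hS, Finset.mem_filter]
      exact ⟨Finset.mem_univ _, phi_pow_card_succ hq hodd ha hns x⟩⟩
  have hcardimg : (Finset.univ.image (phi a)).card = q := by
    rw [Finset.card_image_of_injective _ (phi_injective hq hodd ha hns), ← hq]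
    simp
  have heq : Finset.univ.image (phi a) = T :=
    Finset.eq_of_subset_of_card_le himg (by omega)
  have huT : u ∈ T := by
    rw [hT, Finset.mem_erase]
    refine ⟨hu1, ?_⟩
    simp only [hS, Finset.mem_filter]
    exact ⟨Finset.mem_univ _, hu⟩
  rw [← heq] at huT
  obtain ⟨x, _, hx⟩ := Finset.mem_image.mp huT
  exact ⟨x, hx⟩

end Stmt17Aux


theorem stmt_17 {F : Type*} [Field F] [Fintype F] (q n j : ℕ) (a : F)
    (hq : Fintype.card F = q) (hodd : Odd q) (ha : a ≠ 0) (hns : ¬ IsSquare a)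
    (hn : 0 < n) (hcop : Nat.Coprime n (q + 1)) (hj : 0 < j) :
    (∀ x : F, Function.minimalPeriod (redeiFun a n) x = j ∨
        Function.minimalPeriod (redeiFun a n) x = 1) ↔
      ∀ s, s ∣ q + 1 → ((n : ZMod s) = 1 ∨ orderOf (n : ZMod s) = j) := by
  haveI : Fact (Irreducible (X ^ 2 - C a : F[X])) := ⟨Stmt17Aux.irr hns⟩
  have hq2 : 2 ≤ q := by rw [← hq]; exact Fintype.one_lt_card
  constructor
  · intro hL s hsdvd
    by_cases hs1 : s = 1
    · left; subst hs1; exact Subsingleton.elim _ _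
    · obtain ⟨u, hu, hord⟩ := Stmt17Aux.exists_orderOf_eq (a := a) hq hsdvd hq2
      have hune : u ≠ 1 := by
        intro h; rw [h, orderOf_one] at hord; exact hs1 hord.symm
      obtain ⟨x, hx⟩ := Stmt17Aux.phi_surj hq hodd ha hns u hu hune
      have hmp := Stmt17Aux.minPeriod_eq hq hodd ha hns hcop hn x
      rw [hx, hord] at hmp
      rcases hL x with h | h
      · right; rw [← hmp, h]
      · left
        rw [h] at hmp
        exact orderOf_eq_one_iff.mp hmp.symm
  · intro hR x
    have hmp := Stmt17Aux.minPeriod_eq hq hodd ha hns hcop hn x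
    have hd : orderOf (Stmt17Aux.phi a x) ∣ q + 1 :=
      Stmt17Aux.orderOf_phi_dvd hq hodd ha hns x
    rcases hR _ hd with h | h
    · right; rw [hmp, orderOf_eq_one_iff.mpr h]
    · left; rw [hmp, h]
end

section
/- Let q + 1 = p₀^{k₀}·p₁^{k₁}·…·p_r^{k_r} be the prime factorization of q+1, q an odd prime power, a a non-square in F_q^*, and gcd(n, q+1) = 1. The Rédei permutation R_n of F_q has all cycles of length j or fixed points if and only if for each 0 ≤ ℓ ≤ r one of the following holds: (i) n ≡ 1 (mod p_ℓ^{k_ℓ}); (ii) j = ord_{p_ℓ^{k_ℓ}}(n) and j divides p_ℓ − 1; (iii) j = ord_{p_ℓ^{k_ℓ}}(n), k_ℓ ≥ 2, and j = p_ℓ. -/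
lemma cast_eq_one_iff' (m n : ℕ) : (n : ZMod m) = 1 ↔ n ≡ 1 [MOD m] := by
  rw [show (1 : ZMod m) = ((1:ℕ) : ZMod m) by simp, ZMod.natCast_eq_natCast_iff]

lemma ordm_dvd_iff (m n k : ℕ) : orderOf (n : ZMod m) ∣ k ↔ n ^ k ≡ 1 [MOD m] := by
  rw [orderOf_dvd_iff_pow_eq_one, ← Nat.cast_pow, cast_eq_one_iff']

lemma ordm_eq_one_iff (m n : ℕ) : orderOf (n : ZMod m) = 1 ↔ n ≡ 1 [MOD m] := by
  rw [orderOf_eq_one_iff, cast_eq_one_iff']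

lemma ordm_pos {m n : ℕ} (hm : 0 < m) (h : n.Coprime m) : 0 < orderOf (n : ZMod m) := by
  have ht := Nat.ModEq.pow_totient h
  have h2 : orderOf (n : ZMod m) ∣ m.totient := (ordm_dvd_iff m n _).mpr ht
  have h3 : 0 < m.totient := Nat.totient_pos.mpr hm
  rcases Nat.eq_zero_or_pos (orderOf (n : ZMod m)) with h0 | h0
  · rw [h0] at h2; omega
  · exact h0

lemma ordm_dvd_of_dvd {m' m : ℕ} (n : ℕ) (h : m' ∣ m) :
    orderOf (n : ZMod m') ∣ orderOf (n : ZMod m) := by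
  rw [ordm_dvd_iff]
  exact ((ordm_dvd_iff m n _).mp dvd_rfl).of_dvd h

lemma pow_p_modEq {p i x : ℕ} (hp : p.Prime) (hi : 1 ≤ i) (h : x ≡ 1 [MOD p ^ i]) :
    x ^ p ≡ 1 [MOD p ^ (i + 1)] := by
  have hd : ((p:ℤ) ^ i) ∣ (x:ℤ) - 1 := by
    have := (Nat.modEq_iff_dvd).mp h.symm
    push_cast at this ⊢
    exact this
  have hxp : (x : ZMod p) = 1 := by
    rw [cast_eq_one_iff']
    exact h.of_dvd (dvd_pow_self p (by omega))
  have hsum : (p:ℤ) ∣ ∑ k ∈ Finset.range p, (x:ℤ) ^ k := by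
    rw [← ZMod.intCast_zmod_eq_zero_iff_dvd]
    push_cast
    rw [hxp]
    simp
  have hkey : ((p:ℤ) ^ (i + 1)) ∣ (x:ℤ) ^ p - 1 := by
    rw [← geom_sum_mul, pow_succ']
    exact mul_dvd_mul hsum hd
  rw [Nat.ModEq.comm, Nat.modEq_iff_dvd]
  push_cast
  exact hkey

lemma pow_p_modEq_iter {p i x : ℕ} (hp : p.Prime) (hi : 1 ≤ i) (h : x ≡ 1 [MOD p ^ i]) :
    ∀ c, x ^ (p ^ c) ≡ 1 [MOD p ^ (i + c)]
  | 0 => by simpa using h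
  | (c+1) => by
    have h2 := pow_p_modEq hp (by omega : 1 ≤ i + c) (pow_p_modEq_iter hp hi h c)
    rw [← pow_mul, ← pow_succ] at h2
    rw [← Nat.add_assoc]
    exact h2

lemma ordm_prime_pow_eq {p e i n j : ℕ} (hp : p.Prime) (hi : 1 ≤ i) (hie : i ≤ e)
    (hj : orderOf (n : ZMod (p ^ e)) = j) (hjp : j ∣ p - 1) :
    orderOf (n : ZMod (p ^ i)) = j := by
  have hpj : ¬ p ∣ j := by
    intro hd
    have h1 : 0 < p - 1 := by have := hp.two_le; omega
    have := Nat.le_of_dvd h1 (hd.trans hjp)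
    have := hp.two_le; omega
  set t := orderOf (n : ZMod (p ^ i)) with ht
  have htj : t ∣ j := hj ▸ ordm_dvd_of_dvd n (pow_dvd_pow p hie)
  have hnt : n ^ t ≡ 1 [MOD p ^ i] := (ordm_dvd_iff _ n t).mp dvd_rfl
  have h2 : (n ^ t) ^ (p ^ (e - i)) ≡ 1 [MOD p ^ (i + (e - i))] :=
    pow_p_modEq_iter hp hi hnt (e - i)
  rw [Nat.add_sub_cancel' hie, ← pow_mul] at h2
  have h3 : j ∣ t * p ^ (e - i) := hj ▸ (ordm_dvd_iff _ n _).mpr h2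
  have hco : j.Coprime (p ^ (e - i)) :=
    Nat.Coprime.pow_right _ ((hp.coprime_iff_not_dvd.mpr hpj).symm)
  exact Nat.dvd_antisymm htj (hco.dvd_of_dvd_mul_right h3)

theorem nt_main (q n j : ℕ) (hn : 0 < n) (hcop : Nat.Coprime n (q + 1)) (hj : 0 < j) :
    (∀ d, d ∣ q + 1 → 1 < d →
        orderOf (n : ZMod d) = j ∨ orderOf (n : ZMod d) = 1) ↔
      ∀ p : ℕ, p.Prime → p ∣ q + 1 →
        ((n : ZMod (p ^ (q + 1).factorization p)) = 1 ∨
         (orderOf (n : ZMod (p ^ (q + 1).factorization p)) = j ∧ j ∣ p - 1) ∨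
         (orderOf (n : ZMod (p ^ (q + 1).factorization p)) = j ∧
            2 ≤ (q + 1).factorization p ∧ j = p)) := by
  have hq1 : q + 1 ≠ 0 := by omega
  constructor
  · intro h p hp hpd
    set e := (q + 1).factorization p with he
    have he1 : 1 ≤ e := hp.factorization_pos_of_dvd hq1 hpd
    have hpe_dvd : p ^ e ∣ q + 1 := Nat.ordProj_dvd (q + 1) p
    have hpe1 : 1 < p ^ e := Nat.one_lt_pow (by omega) hp.one_lt
    by_cases h1 : (n : ZMod (p ^ e)) = 1
    · exact Or.inl h1
    right
    have hne1 : ¬ n ≡ 1 [MOD p ^ e] := fun hc => h1 ((cast_eq_one_iff' _ n).mpr hc)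
    have hOe : orderOf (n : ZMod (p ^ e)) = j := by
      rcases h (p ^ e) hpe_dvd hpe1 with h' | h'
      · exact h'
      · exact absurd ((ordm_eq_one_iff _ n).mp h') hne1
    have hcp : n.Coprime p := Nat.Coprime.coprime_dvd_right hpd hcop
    rcases h p hpd hp.one_lt with hOp | hOp
    · left
      refine ⟨hOe, ?_⟩
      have hfer : orderOf (n : ZMod p) ∣ p - 1 := by
        rw [ordm_dvd_iff]
        have := Nat.ModEq.pow_totient hcp
        rwa [Nat.totient_prime hp] at this
      rwa [hOp] at hfer
    · right
      have hnp1 : n ≡ 1 [MOD p] := (ordm_eq_one_iff p n).mp hOp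
      have hex : ∃ i, ¬ n ≡ 1 [MOD p ^ i] := ⟨e, hne1⟩
      set i := Nat.find hex with hidef
      have hPi : ¬ n ≡ 1 [MOD p ^ i] := Nat.find_spec hex
      have hmin : ∀ k, k < i → n ≡ 1 [MOD p ^ k] := fun k hk => by
        have := Nat.find_min hex hk; tauto
      have hi0 : i ≠ 0 := by
        intro h0; apply hPi; rw [h0, pow_zero]; exact Nat.modEq_one
      have hi1 : i ≠ 1 := by
        intro h0; apply hPi; rw [h0, pow_one]; exact hnp1
      have hie : i ≤ e := by
        by_contra hc
        exact hne1 (hmin e (by omega))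
      have hstep : n ^ p ≡ 1 [MOD p ^ i] := by
        have h' := pow_p_modEq hp (i := i - 1) (by omega) (hmin (i - 1) (by omega))
        rwa [show i - 1 + 1 = i by omega] at h'
      have hOi_dvd : orderOf (n : ZMod (p ^ i)) ∣ p := (ordm_dvd_iff _ n p).mpr hstep
      have hOi_ne1 : orderOf (n : ZMod (p ^ i)) ≠ 1 := by
        intro hc
        exact hPi ((ordm_eq_one_iff _ n).mp hc)
      have hOi : orderOf (n : ZMod (p ^ i)) = p :=
        (hp.eq_one_or_self_of_dvd _ hOi_dvd).resolve_left hOi_ne1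
      have hjp : j = p := by
        rcases h (p ^ i) ((pow_dvd_pow p hie).trans hpe_dvd)
          (Nat.one_lt_pow hi0 hp.one_lt) with h' | h'
        · rw [← h', hOi]
        · exact absurd h' hOi_ne1
      exact ⟨hOe, by omega, hjp⟩
  · intro h d hd hd1
    set m := orderOf (n : ZMod d) with hm
    have hnd0 : d ≠ 0 := by rintro rfl; omega
    have key : ∀ p : ℕ, p.Prime → p ∣ q + 1 →
        n ^ j ≡ 1 [MOD p ^ (q + 1).factorization p] := by
      intro p hp hpd
      rcases h p hp hpd with h' | ⟨h', _⟩ | ⟨h', _, _⟩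
      · have h2 : n ≡ 1 [MOD p ^ (q + 1).factorization p] := (cast_eq_one_iff' _ n).mp h'
        simpa using h2.pow j
      · exact (ordm_dvd_iff _ n j).mp (h' ▸ dvd_rfl)
      · exact (ordm_dvd_iff _ n j).mp (h' ▸ dvd_rfl)
    have hmj : m ∣ j := by
      rw [hm, ordm_dvd_iff, Nat.ModEq.comm, Nat.modEq_iff_dvd' (Nat.one_le_pow _ _ hn)]
      rw [Nat.dvd_iff_prime_pow_dvd_dvd]
      intro p k hp hpk
      rcases Nat.eq_zero_or_pos k with rfl | hk
      · simp
      have hpd' : p ^ k ∣ q + 1 := hpk.trans hd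
      have hpd : p ∣ q + 1 := (dvd_pow_self p hk.ne').trans hpd'
      have hke : k ≤ (q + 1).factorization p :=
        (hp.pow_dvd_iff_le_factorization hq1).mp hpd'
      have h2 := (key p hp hpd).of_dvd (pow_dvd_pow p hke)
      rwa [Nat.ModEq.comm, Nat.modEq_iff_dvd' (Nat.one_le_pow _ _ hn)] at h2
    by_cases hm1 : m = 1
    · exact Or.inr hm1
    left
    have hnd : ¬ n ≡ 1 [MOD d] := fun hc => hm1 ((ordm_eq_one_iff d n).mpr hc)
    have hex : ∃ p, p.Prime ∧ p ∣ d ∧ ¬ n ≡ 1 [MOD p ^ d.factorization p] := by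
      by_contra hc
      push_neg at hc
      apply hnd
      rw [Nat.ModEq.comm, Nat.modEq_iff_dvd' hn]
      rw [Nat.dvd_iff_prime_pow_dvd_dvd]
      intro p k hp hpk
      rcases Nat.eq_zero_or_pos k with rfl | hk
      · simp
      have hpd : p ∣ d := (dvd_pow_self p hk.ne').trans hpk
      have hke : k ≤ d.factorization p :=
        (hp.pow_dvd_iff_le_factorization hnd0).mp hpk
      have h1 := (hc p hp hpd).of_dvd (pow_dvd_pow p hke)
      rwa [Nat.ModEq.comm, Nat.modEq_iff_dvd' hn] at h1
    obtain ⟨p, hp, hpd, hnp⟩ := hex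
    set i := d.factorization p with hidef
    set e := (q + 1).factorization p with he
    have hi1 : 1 ≤ i := hp.factorization_pos_of_dvd hnd0 hpd
    have hpi_dvd_d : p ^ i ∣ d := Nat.ordProj_dvd d p
    have hie : i ≤ e := (hp.pow_dvd_iff_le_factorization hq1).mp (hpi_dvd_d.trans hd)
    have hpq : p ∣ q + 1 := hpd.trans hd
    have hOi_dvd_m : orderOf (n : ZMod (p ^ i)) ∣ m := ordm_dvd_of_dvd n hpi_dvd_d
    have hOi_ne1 : orderOf (n : ZMod (p ^ i)) ≠ 1 := fun hc =>
      hnp ((ordm_eq_one_iff _ n).mp hc)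
    rcases h p hp hpq with h' | ⟨h', hj'⟩ | ⟨h', _, hj'⟩
    · exact absurd (((cast_eq_one_iff' _ n).mp h').of_dvd (pow_dvd_pow p hie)) hnp
    · have hOi : orderOf (n : ZMod (p ^ i)) = j := ordm_prime_pow_eq hp hi1 hie h' hj'
      exact Nat.dvd_antisymm hmj (hOi ▸ hOi_dvd_m)
    · have hOi_dvd : orderOf (n : ZMod (p ^ i)) ∣ p := by
        have := ordm_dvd_of_dvd n (pow_dvd_pow p hie)
        rw [h', hj'] at this
        exact this
      have hOi : orderOf (n : ZMod (p ^ i)) = p :=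
        (hp.eq_one_or_self_of_dvd _ hOi_dvd).resolve_left hOi_ne1
      have hjm : j ∣ m := by rw [hj', ← hOi]; exact hOi_dvd_m
      exact Nat.dvd_antisymm hmj hjm

set_option maxHeartbeats 1000000 in
open Polynomial in
theorem redei_iff {F : Type*} [Field F] [Fintype F] (q n j : ℕ) (a : F)
    (hq : Fintype.card F = q) (hodd : Odd q) (ha : a ≠ 0) (hns : ¬ IsSquare a)
    (hn : 0 < n) (hcop : Nat.Coprime n (q + 1)) (hj : 0 < j) :
    (∀ x : F, Function.minimalPeriod (redeiFun a n) x = j ∨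
        Function.minimalPeriod (redeiFun a n) x = 1) ↔
    (∀ d, d ∣ q + 1 → 1 < d →
      (orderOf (n : ZMod d) = j ∨ orderOf (n : ZMod d) = 1)) := by
  have hq2 : 2 ≤ q := by
    have h1 : 1 < Fintype.card F := Fintype.one_lt_card
    omega
  -- characteristic facts
  set p := ringChar F with hpdef
  have hp : p.Prime := CharP.char_is_prime F p
  haveI hpf : Fact p.Prime := ⟨hp⟩
  obtain ⟨m, -, hqpm⟩ := FiniteField.card F p
  rw [hq] at hqpm
  have hp2 : p ≠ 2 := by
    intro h2
    have hdq : p ∣ q := by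
      rw [hqpm]; exact dvd_pow_self p (by exact_mod_cast m.ne_zero)
    rw [h2] at hdq; rcases hodd with ⟨t, rfl⟩; omega
  have h2F : (2 : F) ≠ 0 := Ring.two_ne_zero (by rw [← hpdef]; exact hp2)
  -- the quadratic f and the field K
  set f : F[X] := X ^ 2 - C a with hfdef
  have hmon : f.Monic := monic_X_pow_sub_C a (by norm_num)
  have hfne : f ≠ 0 := hmon.ne_zero
  have hirr : Irreducible f :=
    (X_pow_sub_C_irreducible_iff_of_prime Nat.prime_two).mpr
      (fun b hb => hns ⟨b, by rw [← hb, sq]⟩)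
  haveI := Fact.mk hirr
  set K := AdjoinRoot f with hK
  letI : Field K := AdjoinRoot.instField
  set ι : F →+* K := algebraMap F K with hι
  have hιinj : Function.Injective ι := ι.injective
  set s : K := AdjoinRoot.root f with hs
  have hs2 : s ^ 2 = ι a := by
    have h := AdjoinRoot.eval₂_root f
    rw [hfdef] at h
    simp only [eval₂_sub, eval₂_pow, eval₂_X, eval₂_C] at h
    have h2 : s ^ 2 - AdjoinRoot.of f a = 0 := h
    rw [sub_eq_zero] at h2
    rw [h2, hι, AdjoinRoot.algebraMap_eq]
  haveI : CharP K p := charP_of_injective_algebraMap (algebraMap F K).injective p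
  have hfrob : ∀ y z : K, (y + z) ^ q = y ^ q + z ^ q := by
    intro y z; rw [hqpm]; exact add_pow_char_pow y z p m
  have hιq : ∀ c : F, (ι c) ^ q = ι c := by
    intro c; rw [← map_pow]; congr 1; rw [← hq]; exact FiniteField.pow_card c
  have hs0 : s ≠ 0 := by
    intro h0
    apply ha
    have : ι a = 0 := by rw [← hs2, h0]; ring
    exact hιinj (by simpa using this)
  have h2K : (2 : K) ≠ 0 := by
    intro h0
    apply h2F
    apply hιinj
    rw [map_ofNat, map_zero]
    exact h0
  -- s ^ q = -s
  obtain ⟨k, hk⟩ := hodd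
  have hsq : s ^ q = -s := by
    have hchar2 : ringChar F ≠ 2 := by rw [← hpdef]; exact hp2
    have haq : a ^ (q - 1) = 1 := by
      rw [← hq]; exact FiniteField.pow_card_sub_one_eq_one a ha
    have hsq1 : a ^ k * a ^ k = 1 := by
      rw [← pow_add, show k + k = q - 1 by omega]; exact haq
    have hne : a ^ k ≠ 1 := by
      intro h1
      apply hns
      rw [FiniteField.isSquare_iff hchar2 ha, hq, show q / 2 = k by omega]
      exact h1
    have hak : a ^ k = -1 := (mul_self_eq_one_iff.mp hsq1).resolve_left hne
    calc s ^ q = (s ^ 2) ^ k * s := by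
          rw [← pow_mul, ← pow_succ, show 2 * k + 1 = q by omega]
      _ = ι (a ^ k) * s := by rw [hs2, map_pow]
      _ = -s := by rw [hak, map_neg, map_one, neg_one_mul]
  -- degree bound for remainders
  have hdegf : f.degree = 2 := by rw [hfdef]; exact degree_X_pow_sub_C (by norm_num) a
  have hdeg1 : ∀ P : F[X], (P %ₘ f).degree ≤ 1 := by
    intro P
    have h2 := degree_modByMonic_lt P hmon
    rw [hdegf] at h2
    rcases eq_or_ne (P %ₘ f) 0 with h0 | h0
    · rw [h0, degree_zero]; exact bot_le
    · rw [degree_eq_natDegree h0] at h2 ⊢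
      exact_mod_cast Nat.lt_succ_iff.mp (by exact_mod_cast h2)
  -- representation of elements of K
  have hrep : ∀ y : K, ∃ c d : F, y = ι c + ι d * s := by
    intro y
    obtain ⟨P, rfl⟩ := AdjoinRoot.mk_surjective y
    refine ⟨(P %ₘ f).coeff 0, (P %ₘ f).coeff 1, ?_⟩
    conv_lhs => rw [← modByMonic_add_div P f]
    rw [map_add, map_mul, AdjoinRoot.mk_self, zero_mul, add_zero]
    conv_lhs => rw [eq_X_add_C_of_degree_le_one (hdeg1 P)]
    rw [map_add, map_mul, AdjoinRoot.mk_X, AdjoinRoot.mk_C, AdjoinRoot.mk_C]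
    rw [hι, AdjoinRoot.algebraMap_eq]
    ring
  -- fixed points of Frobenius
  have hfix : ∀ y : K, y ^ q = y → ∃ c : F, y = ι c := by
    intro y hy
    obtain ⟨c, d, rfl⟩ := hrep y
    have h1 : (ι c + ι d * s) ^ q = ι c - ι d * s := by
      rw [hfrob, mul_pow, hιq, hιq, hsq]; ring
    rw [h1] at hy
    have h2 : (2 : K) * (ι d * s) = 0 := by linear_combination -hy
    rcases mul_eq_zero.mp h2 with h3 | h3
    · exact absurd h3 h2K
    rcases mul_eq_zero.mp h3 with h4 | h4
    · refine ⟨c, ?_⟩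
      rw [h4]; ring
    · exact absurd h4 hs0
  -- the Möbius-type map U
  set U : F → K := fun x => (ι x + s) / (ι x - s) with hU
  have hxs : ∀ x : F, ι x + s ≠ 0 := by
    intro x h0
    apply hns
    have h1 : s = ι (-x) := by rw [map_neg]; linear_combination h0
    refine ⟨-x, ?_⟩
    apply hιinj
    rw [← hs2, h1, map_mul]
    ring
  have hxms : ∀ x : F, ι x - s ≠ 0 := by
    intro x h0
    apply hns
    have h1 : s = ι x := by linear_combination -h0
    refine ⟨x, ?_⟩
    apply hιinj
    rw [← hs2, h1, map_mul]
    ring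
  have hfrob_plus : ∀ x : F, (ι x + s) ^ q = ι x - s := by
    intro x; rw [hfrob, hιq, hsq, sub_eq_add_neg]
  have hfrob_minus : ∀ x : F, (ι x - s) ^ q = ι x + s := by
    intro x
    rw [sub_eq_add_neg, hfrob, hιq]
    have : (-s) ^ q = s := by
      rw [Odd.neg_pow ⟨k, by omega⟩, hsq]; ring
    rw [this]
  have husq : ∀ x : F, (U x) ^ (q + 1) = 1 := by
    intro x
    rw [hU]
    simp only
    rw [div_pow, pow_succ, pow_succ, hfrob_plus, hfrob_minus,
      mul_comm (ι x - s) (ι x + s)]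
    exact div_self (mul_ne_zero (hxs x) (hxms x))
  have hu1 : ∀ x : F, U x ≠ 1 := by
    intro x h1
    rw [hU] at h1
    simp only at h1
    rw [div_eq_one_iff_eq (hxms x)] at h1
    have h2 : (2:K) * s = 0 := by linear_combination h1
    rcases mul_eq_zero.mp h2 with h3 | h3
    · exact h2K h3
    · exact hs0 h3
  have hu0 : ∀ x : F, U x ≠ 0 := fun x => div_ne_zero (hxs x) (hxms x)
  have hord_dvd : ∀ x : F, orderOf (U x) ∣ q + 1 :=
    fun x => orderOf_dvd_of_pow_eq_one (husq x)
  have hord_pos : ∀ x : F, 0 < orderOf (U x) := by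
    intro x
    rw [orderOf_pos_iff]
    exact isOfFinOrder_iff_pow_eq_one.mpr ⟨q + 1, by omega, husq x⟩
  have hord_ne1 : ∀ x : F, orderOf (U x) ≠ 1 := by
    intro x h1
    exact hu1 x (orderOf_eq_one_iff.mp h1)
  have hddd : ∀ A B c : K, c ≠ 0 → B ≠ 0 → (A / c) / (B / c) = A / B := by
    intro A B c hc hB
    field_simp
  have hinj : Function.Injective U := by
    intro y z hyz
    simp only [hU] at hyz
    rw [div_eq_div_iff (hxms y) (hxms z)] at hyz
    have h2 : (2 : K) * s * (ι z - ι y) = 0 := by linear_combination hyz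
    rcases mul_eq_zero.mp h2 with h3 | h3
    · rcases mul_eq_zero.mp h3 with h4 | h4
      · exact absurd h4 h2K
      · exact absurd h4 hs0
    · have h5 : ι y = ι z := by linear_combination -h3
      exact hιinj h5
  -- the key algebraic identity
  have hGH : ∀ (x : F) (t : K), t ^ 2 = ι a →
      (ι x + t) ^ n = ι (((C x + X) ^ n %ₘ f).coeff 0) +
        ι (((C x + X) ^ n %ₘ f).coeff 1) * t := by
    intro x t ht
    have hfe : eval₂ ι t f = 0 := by
      show eval₂ ι t (X ^ 2 - C a) = 0
      simp only [eval₂_sub, eval₂_pow, eval₂_X, eval₂_C]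
      rw [ht]; ring
    have h1 : (ι x + t) ^ n = eval₂ ι t ((C x + X) ^ n) := by
      rw [eval₂_pow, eval₂_add, eval₂_C, eval₂_X]
    rw [h1]
    conv_lhs => rw [← modByMonic_add_div ((C x + X) ^ n) f]
    rw [eval₂_add, eval₂_mul, hfe, zero_mul, add_zero]
    conv_lhs => rw [eq_X_add_C_of_degree_le_one (hdeg1 ((C x + X) ^ n))]
    rw [eval₂_add, eval₂_mul, eval₂_C, eval₂_C, eval₂_X]
    ring
  have hplus : ∀ x : F, (ι x + s) ^ n =
      ι (((C x + X) ^ n %ₘ f).coeff 0) + ι (((C x + X) ^ n %ₘ f).coeff 1) * s :=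
    fun x => hGH x s hs2
  have hminus : ∀ x : F, (ι x - s) ^ n =
      ι (((C x + X) ^ n %ₘ f).coeff 0) - ι (((C x + X) ^ n %ₘ f).coeff 1) * s := by
    intro x
    have h := hGH x (-s) (by rw [neg_sq]; exact hs2)
    rw [← sub_eq_add_neg] at h
    rw [h]; ring
  -- nonvanishing of H
  have hHne : ∀ x : F, ((C x + X) ^ n %ₘ f).coeff 1 ≠ 0 := by
    intro x h0
    have hG : (ι x - s) ^ n = ι (((C x + X) ^ n %ₘ f).coeff 0) := by
      rw [hminus x, h0, map_zero, zero_mul, sub_zero]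
    have hGne : ι (((C x + X) ^ n %ₘ f).coeff 0) ≠ 0 := by
      rw [← hG]; exact pow_ne_zero n (hxms x)
    have hun : (U x) ^ n = 1 := by
      simp only [hU]
      rw [div_pow, hplus x, hminus x, h0, map_zero, zero_mul, add_zero, sub_zero]
      exact div_self hGne
    have hd1 : orderOf (U x) ∣ n := orderOf_dvd_of_pow_eq_one hun
    have hd2 : orderOf (U x) ∣ Nat.gcd n (q + 1) := Nat.dvd_gcd hd1 (hord_dvd x)
    rw [Nat.Coprime] at hcop
    rw [hcop] at hd2
    exact hord_ne1 x (Nat.dvd_one.mp hd2)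
  -- conjugation
  have hconj : ∀ x : F, U (redeiFun a n x) = (U x) ^ n := by
    intro x
    set G := ((C x + X) ^ n %ₘ f).coeff 0 with hGdef
    set H := ((C x + X) ^ n %ₘ f).coeff 1 with hHdef
    have hHK : ι H ≠ 0 := by
      intro h0
      exact hHne x (hιinj (by rw [map_zero]; exact h0))
    have hGm : ι G - ι H * s ≠ 0 := by
      have h1 : (ι x - s) ^ n ≠ 0 := pow_ne_zero n (hxms x)
      rwa [hminus x] at h1
    have hred : redeiFun a n x = G / H := rfl
    have hRHS : (U x) ^ n = (ι G + ι H * s) / (ι G - ι H * s) := by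
      simp only [hU]
      rw [div_pow, hplus x, hminus x]
    have e1 : ι (redeiFun a n x) + s = (ι G + ι H * s) / ι H := by
      rw [hred, map_div₀]
      field_simp
    have e2 : ι (redeiFun a n x) - s = (ι G - ι H * s) / ι H := by
      rw [hred, map_div₀]
      field_simp
    simp only [hU]
    rw [e1, e2, hRHS, hddd _ _ _ hHK hGm]
  -- period formula
  have hperiod : ∀ x : F, Function.minimalPeriod (redeiFun a n) x
      = orderOf ((n : ZMod (orderOf (U x)))) := by
    intro x
    set d := orderOf (U x) with hd
    have hdq : d ∣ q + 1 := hord_dvd x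
    have hd0 : 0 < d := hord_pos x
    have hcd : n.Coprime d := Nat.Coprime.coprime_dvd_right hdq hcop
    have hmm0 : 0 < orderOf ((n : ZMod d)) := ordm_pos hd0 hcd
    have hiter : ∀ kk : ℕ, U ((redeiFun a n)^[kk] x) = (U x) ^ (n ^ kk) := by
      intro kk
      induction kk with
      | zero => simp
      | succ t iht =>
        rw [Function.iterate_succ_apply', hconj, iht, ← pow_mul, ← pow_succ]
    have hiff : ∀ kk : ℕ, (redeiFun a n)^[kk] x = x ↔ orderOf ((n : ZMod d)) ∣ kk := by
      intro kk
      rw [ordm_dvd_iff]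
      set v : Kˣ := Units.mk0 (U x) (hu0 x) with hv
      have hvord : orderOf v = d := by
        rw [hd, ← orderOf_units]
        rfl
      constructor
      · intro hk
        have h1 : (U x) ^ (n ^ kk) = (U x) ^ 1 := by
          rw [← hiter kk, hk, pow_one]
        have hup : v ^ (n ^ kk) = v ^ 1 := by
          apply Units.ext
          rw [Units.val_pow_eq_pow_val, Units.val_pow_eq_pow_val]
          exact h1
        have h2 := pow_eq_pow_iff_modEq.mp hup
        rwa [hvord] at h2
      · intro hk
        have hup : v ^ (n ^ kk) = v ^ 1 := by
          apply pow_eq_pow_iff_modEq.mpr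
          rwa [hvord]
        have h1 : (U x) ^ (n ^ kk) = (U x) ^ 1 := by
          have h3 := congrArg Units.val hup
          rwa [Units.val_pow_eq_pow_val, Units.val_pow_eq_pow_val] at h3
        apply hinj
        rw [hiter kk, h1, pow_one]
    apply Nat.dvd_antisymm
    · exact Function.IsPeriodicPt.minimalPeriod_dvd ((hiff _).mpr dvd_rfl)
    · exact (hiff _).mp (Function.isPeriodicPt_minimalPeriod (redeiFun a n) x)
  -- surjectivity onto all orders dividing q + 1
  haveI : Module.Finite F K := Module.Finite.of_basis (AdjoinRoot.powerBasis hfne).basis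
  haveI : Finite K := Module.finite_of_finite F
  haveI : Fintype K := Fintype.ofFinite K
  have hfinrank : Module.finrank F K = 2 := by
    rw [(AdjoinRoot.powerBasis hfne).finrank]
    show f.natDegree = 2
    rw [hfdef]
    exact natDegree_X_pow_sub_C
  have hcardK : Fintype.card K = q ^ 2 := by
    rw [Module.card_eq_pow_finrank (K := F) (V := K), hq, hfinrank]
  have hcardU : Nat.card Kˣ = q ^ 2 - 1 := by
    rw [Nat.card_units, Nat.card_eq_fintype_card, hcardK]
  have hq21 : q + 1 ∣ q ^ 2 - 1 := by
    refine ⟨q - 1, ?_⟩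
    rw [show (1 : ℕ) = 1 ^ 2 by norm_num]
    rw [Nat.sq_sub_sq]
    norm_num
  have hN0 : q ^ 2 - 1 ≠ 0 := by
    have h4 : 2 ^ 2 ≤ q ^ 2 := Nat.pow_le_pow_left hq2 2
    omega
  have hsurj : ∀ d, d ∣ q + 1 → 1 < d → ∃ x : F, orderOf (U x) = d := by
    intro d hdq hd1
    obtain ⟨g, hg⟩ := IsCyclic.exists_ofOrder_eq_natCard (α := Kˣ)
    rw [hcardU] at hg
    have hdN : d ∣ q ^ 2 - 1 := hdq.trans hq21
    set g' := g ^ ((q ^ 2 - 1) / d) with hg'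
    have hord : orderOf g' = d := by
      rw [hg', orderOf_pow, hg, Nat.gcd_eq_right (Nat.div_dvd_of_dvd hdN)]
      exact Nat.div_div_self hdN hN0
    set u0 : K := (g' : K) with hu0K
    have hordu0 : orderOf u0 = d := by rw [hu0K, orderOf_units, hord]
    have hu0ne0 : u0 ≠ 0 := Units.ne_zero g'
    have hu0ne1 : u0 ≠ 1 := by
      intro h1
      rw [h1, orderOf_one] at hordu0; omega
    have hu0pow : u0 ^ (q + 1) = 1 :=
      orderOf_dvd_iff_pow_eq_one.mp (hordu0 ▸ hdq)
    have hu0q : u0 ^ q = u0⁻¹ := by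
      apply eq_inv_of_mul_eq_one_left
      rw [← pow_succ]; exact hu0pow
    have hu0m1 : u0 - 1 ≠ 0 := sub_ne_zero.mpr hu0ne1
    have h1u0 : 1 - u0 ≠ 0 := sub_ne_zero.mpr (Ne.symm hu0ne1)
    set y : K := s * (u0 + 1) / (u0 - 1) with hy
    have hyq : y ^ q = y := by
      have hplusq : (u0 + 1) ^ q = u0⁻¹ + 1 := by
        have h' := hfrob u0 1
        rw [one_pow, hu0q] at h'
        exact h'
      have hminusq : (u0 - 1) ^ q = u0⁻¹ - 1 := by
        have h' := hfrob u0 (-1)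
        rw [hu0q] at h'
        have hneg : (-1 : K) ^ q = -1 := Odd.neg_one_pow ⟨k, by omega⟩
        rw [hneg] at h'
        rw [sub_eq_add_neg, h', ← sub_eq_add_neg]
      rw [hy, div_pow, mul_pow, hsq, hplusq, hminusq, inv_eq_one_div]
      field_simp
      ring
    obtain ⟨x, hxy⟩ := hfix y hyq
    refine ⟨x, ?_⟩
    have hUx : U x = u0 := by
      simp only [hU]
      rw [← hxy]
      have e1 : y + s = 2 * s * u0 / (u0 - 1) := by
        rw [hy]; field_simp; ring
      have e2 : y - s = 2 * s / (u0 - 1) := by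
        rw [hy]; field_simp; ring
      rw [e1, e2, hddd _ _ _ hu0m1 (mul_ne_zero h2K hs0)]
      exact mul_div_cancel_left₀ u0 (mul_ne_zero h2K hs0)
    rw [hUx, hordu0]
  constructor
  · intro hL d hdq hd1
    obtain ⟨x, hx⟩ := hsurj d hdq hd1
    have hP := hL x
    rw [hperiod x, hx] at hP
    exact hP
  · intro hR x
    have hdq := hord_dvd x
    have hd1 : 1 < orderOf (U x) := by
      have hp1 := hord_pos x
      have hp2 := hord_ne1 x
      omega
    have hP := hR (orderOf (U x)) hdq hd1
    rw [hperiod x]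
    exact hP

theorem stmt_18 {F : Type*} [Field F] [Fintype F] (q n j : ℕ) (a : F)
    (hq : Fintype.card F = q) (hodd : Odd q) (ha : a ≠ 0) (hns : ¬ IsSquare a)
    (hn : 0 < n) (hcop : Nat.Coprime n (q + 1)) (hj : 0 < j) :
    (∀ x : F, Function.minimalPeriod (redeiFun a n) x = j ∨
        Function.minimalPeriod (redeiFun a n) x = 1) ↔
      ∀ p : ℕ, p.Prime → p ∣ q + 1 →
        ((n : ZMod (p ^ (q + 1).factorization p)) = 1 ∨
         (orderOf (n : ZMod (p ^ (q + 1).factorization p)) = j ∧ j ∣ p - 1) ∨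
         (orderOf (n : ZMod (p ^ (q + 1).factorization p)) = j ∧
            2 ≤ (q + 1).factorization p ∧ j = p)) := by
  exact (redei_iff q n j a hq hodd ha hns hn hcop hj).trans (nt_main q n j hn hcop hj)
end
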